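/- arXiv:1801.08302 — 4 statements merged into one kernel-verified Lean document; each statement's English description precedes it below -/
import Mathlib

section
/- Hölder's inequality for weak Lorentz spaces with change of measures fails in general: let n ≥ 1, 0 < p1, p2 < ∞, 1/p = 1/p1 + 1/p2, and define f(x) = |x|^{-n/p1}·χ_{{|x|≥1}}(x), g(x) = |x|^{n/p1}·χ_{{|x|≥1}}(x), w1(x) = 1, and w2(x) = |x|^{-n(1+p2/p1)} for |x| ≥ 1 and w2(x) = 1 for |x| < 1, and set w := w1^{p/p1}·w2^{p/p2}. Then ‖f‖_{L^{p1,∞}(w1)} < ∞ and ‖g‖_{L^{p2,∞}(w2)} < ∞, but ‖fg‖_{L^{p,∞}(w)} = ∞. -/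
open MeasureTheory ENNReal Set

noncomputable section

/-- Euclidean space ℝⁿ. -/
abbrev Rn (n : ℕ) := EuclideanSpace ℝ (Fin n)

/-- An axis-parallel cube in ℝⁿ. -/
def IsCube {n : ℕ} (Q : Set (Rn n)) : Prop :=
  ∃ (c : Rn n) (r : ℝ), 0 < r ∧ Q = {x : Rn n | ∀ i, |x i - c i| ≤ r}

/-- A weight: a positive locally integrable function. -/
def IsWeight {n : ℕ} (w : Rn n → ℝ) : Prop :=
  (∀ x, 0 < w x) ∧ MeasureTheory.LocallyIntegrable w volume

/-- v(F) = ∫_F v. -/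
def wSet {n : ℕ} (v : Rn n → ℝ) (F : Set (Rn n)) : ℝ≥0∞ :=
  ∫⁻ x in F, ENNReal.ofReal (v x)

/-- Distribution function of an ℝ≥0∞-valued function w.r.t. the weight v. -/
def distrib {n : ℕ} (v : Rn n → ℝ) (f : Rn n → ℝ≥0∞) (t : ℝ) : ℝ≥0∞ :=
  wSet v {x | ENNReal.ofReal t < f x}

/-- Weak Lorentz quasinorm ‖f‖_{L^{p,∞}(v)} = sup_{y>0} y · v({f > y})^{1/p}. -/
def wLpInfty {n : ℕ} (p : ℝ) (v : Rn n → ℝ) (f : Rn n → ℝ≥0∞) : ℝ≥0∞ :=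
  ⨆ (y : ℝ) (_ : 0 < y), ENNReal.ofReal y * (distrib v f y) ^ (1 / p)

/-- Lorentz norm ‖f‖_{L^{p,1}(v)} = p ∫₀^∞ v({f > y})^{1/p} dy. -/
def wLp1 {n : ℕ} (p : ℝ) (v : Rn n → ℝ) (f : Rn n → ℝ≥0∞) : ℝ≥0∞ :=
  ENNReal.ofReal p * ∫⁻ y in Set.Ioi (0 : ℝ), (distrib v f y) ^ (1 / p)

/-- Lebesgue norm ‖f‖_{L^p(v)} = (∫ f^p v)^{1/p}. -/
def wLp {n : ℕ} (p : ℝ) (v : Rn n → ℝ) (f : Rn n → ℝ≥0∞) : ℝ≥0∞ :=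
  (∫⁻ x, (f x) ^ p * ENNReal.ofReal (v x)) ^ (1 / p)

/-- ‖f‖_{L^∞(v)}: essential supremum with respect to the measure with density v. -/
def wLinfty {n : ℕ} (v : Rn n → ℝ) (f : Rn n → ℝ≥0∞) : ℝ≥0∞ :=
  essSup f (volume.withDensity fun x => ENNReal.ofReal (v x))

/-- |f| as an ℝ≥0∞-valued function. -/
def ennAbs {n : ℕ} (f : Rn n → ℝ) : Rn n → ℝ≥0∞ := fun x => ENNReal.ofReal |f x|

/-- The Hardy–Littlewood maximal operator over cubes. -/
def maximal {n : ℕ} (f : Rn n → ℝ) (x : Rn n) : ℝ≥0∞ :=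
  ⨆ (Q : Set (Rn n)) (_ : IsCube Q) (_ : x ∈ Q),
    (volume Q)⁻¹ * ∫⁻ y in Q, ENNReal.ofReal |f y|

/-- The 2-fold product of Hardy–Littlewood maximal operators. -/
def Mprod {n : ℕ} (f g : Rn n → ℝ) (x : Rn n) : ℝ≥0∞ :=
  maximal f x * maximal g x

/-- The Muckenhoupt A_p constant, 1 < p. -/
def ApConst {n : ℕ} (p : ℝ) (v : Rn n → ℝ) : ℝ≥0∞ :=
  ⨆ (Q : Set (Rn n)) (_ : IsCube Q),
    ((volume Q)⁻¹ * ∫⁻ x in Q, ENNReal.ofReal (v x)) *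
      ((volume Q)⁻¹ * ∫⁻ x in Q, ENNReal.ofReal (v x ^ (1 - p / (p - 1)))) ^ (p - 1)

/-- The Muckenhoupt A₁ condition: Mv ≤ C v a.e. -/
def MemA1 {n : ℕ} (v : Rn n → ℝ) : Prop :=
  ∃ C : ℝ, ∀ᵐ x ∂(volume : Measure (Rn n)), maximal v x ≤ ENNReal.ofReal (C * v x)

/-- Membership in the Muckenhoupt class A_p, 1 ≤ p < ∞. -/
def MemAp {n : ℕ} (p : ℝ) (v : Rn n → ℝ) : Prop :=
  (p = 1 ∧ MemA1 v) ∨ (1 < p ∧ ApConst p v ≠ ∞)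

/-- Membership in A_∞ = ∪_{p ≥ 1} A_p. -/
def MemAinfty {n : ℕ} (v : Rn n → ℝ) : Prop :=
  ∃ p : ℝ, 1 ≤ p ∧ MemAp p v

/-- The A_p^𝓡 constant: sup_Q v(Q)^{1/p} ‖χ_Q v⁻¹‖_{L^{p',∞}(v)} / |Q|, with p' = ∞ if p = 1. -/
def AprConst {n : ℕ} (p : ℝ) (v : Rn n → ℝ) : ℝ≥0∞ :=
  ⨆ (Q : Set (Rn n)) (_ : IsCube Q),
    (wSet v Q) ^ (1 / p) *
      (if p = 1 then wLinfty v (Q.indicator fun y => ENNReal.ofReal (v y)⁻¹)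
        else wLpInfty (p / (p - 1)) v (Q.indicator fun y => ENNReal.ofReal (v y)⁻¹)) /
      volume Q

/-- Membership in the restricted weak type class A_p^𝓡. -/
def MemApR {n : ℕ} (p : ℝ) (v : Rn n → ℝ) : Prop :=
  AprConst p v ≠ ∞

/-- The bilinear Hardy–Littlewood maximal operator of Calderón. -/
def bilinearM {n : ℕ} (f g : Rn n → ℝ) (x : Rn n) : ℝ≥0∞ :=
  ⨆ (r : ℝ) (_ : 0 < r),
    (volume (Metric.ball (0 : Rn n) r))⁻¹ *
      ∫⁻ y in Metric.ball (0 : Rn n) r, ENNReal.ofReal (|f (x - y)| * |g (x + y)|)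

lemma meas_set {n : ℕ} (R : ℝ) : MeasurableSet {x : Rn n | R < ‖x‖} :=
  measurableSet_lt measurable_const measurable_norm

lemma meas_fn {n : ℕ} (a : ℝ) : Measurable fun x : Rn n => ENNReal.ofReal (‖x‖ ^ (-a)) := by
  fun_prop

lemma scale_lemma {n : ℕ} (a : ℝ) {R : ℝ} (hR : 0 < R) :
    ∫⁻ x in {x : Rn n | R < ‖x‖}, ENNReal.ofReal (‖x‖ ^ (-a)) =
      ENNReal.ofReal (R ^ ((n : ℝ) - a)) *
        ∫⁻ x in {x : Rn n | 1 < ‖x‖}, ENNReal.ofReal (‖x‖ ^ (-a)) := by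
  set F : Rn n → ℝ≥0∞ := ({x : Rn n | 1 < ‖x‖}).indicator fun x => ENNReal.ofReal (‖x‖ ^ (-a))
    with hF
  have hFmeas : Measurable F := (meas_fn a).indicator (meas_set 1)
  have hmap : ∫⁻ x, F (R⁻¹ • x) = ENNReal.ofReal (R ^ (n : ℕ)) * ∫⁻ x, F x := by
    calc ∫⁻ x, F (R⁻¹ • x)
        = ∫⁻ y, F y ∂(Measure.map (fun x : Rn n => R⁻¹ • x) volume) :=
          (lintegral_map hFmeas (measurable_const_smul _)).symm
      _ = ENNReal.ofReal (R ^ (n : ℕ)) * ∫⁻ x, F x := by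
          rw [Measure.map_addHaar_smul volume (inv_ne_zero hR.ne'), lintegral_smul_measure]
          congr 2
          rw [finrank_euclideanSpace_fin, inv_pow, inv_inv, abs_of_pos (pow_pos hR n)]
  have hpt : ∀ x : Rn n, F (R⁻¹ • x) =
      ENNReal.ofReal (R ^ a) * ({x : Rn n | R < ‖x‖}).indicator
        (fun x => ENNReal.ofReal (‖x‖ ^ (-a))) x := by
    intro x
    have hns : ‖R⁻¹ • x‖ = R⁻¹ * ‖x‖ := by
      rw [norm_smul, Real.norm_eq_abs, abs_of_pos (inv_pos.mpr hR)]
    have hcond : (1 < ‖R⁻¹ • x‖) ↔ R < ‖x‖ := by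
      rw [hns, lt_inv_mul_iff₀ hR, mul_one]
    by_cases hx : R < ‖x‖
    · have h1 : (1 : ℝ) < ‖R⁻¹ • x‖ := hcond.mpr hx
      rw [hF]
      simp only [Set.indicator_apply, mem_setOf_eq, if_pos h1, if_pos hx]
      have hval : (R⁻¹ * ‖x‖) ^ (-a) = R ^ a * ‖x‖ ^ (-a) := by
        rw [Real.mul_rpow (inv_pos.mpr hR).le (norm_nonneg x), ← Real.rpow_neg_one R,
          ← Real.rpow_mul hR.le]
        norm_num
      rw [hns, hval, ENNReal.ofReal_mul (Real.rpow_nonneg hR.le a)]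
    · rw [hF]
      simp only [Set.indicator_apply, mem_setOf_eq, if_neg (fun h => hx (hcond.mp h)),
        if_neg hx, mul_zero]
  have h2 : ∫⁻ x, F (R⁻¹ • x) = ENNReal.ofReal (R ^ a) *
      ∫⁻ x in {x : Rn n | R < ‖x‖}, ENNReal.ofReal (‖x‖ ^ (-a)) := by
    simp_rw [hpt]
    rw [lintegral_const_mul' _ _ ENNReal.ofReal_ne_top,
      lintegral_indicator (meas_set R)]
  have h3 : ∫⁻ x, F x = ∫⁻ x in {x : Rn n | 1 < ‖x‖}, ENNReal.ofReal (‖x‖ ^ (-a)) := by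
    rw [hF, lintegral_indicator (meas_set 1)]
  rw [h2, h3] at hmap
  have key := hmap
  have hRa : ENNReal.ofReal (R ^ (-a)) * ENNReal.ofReal (R ^ a) = 1 := by
    rw [← ENNReal.ofReal_mul (Real.rpow_nonneg hR.le _), ← Real.rpow_add hR, neg_add_cancel,
      Real.rpow_zero, ENNReal.ofReal_one]
  calc ∫⁻ x in {x : Rn n | R < ‖x‖}, ENNReal.ofReal (‖x‖ ^ (-a))
      = (ENNReal.ofReal (R ^ (-a)) * ENNReal.ofReal (R ^ a)) *
        ∫⁻ x in {x : Rn n | R < ‖x‖}, ENNReal.ofReal (‖x‖ ^ (-a)) := by rw [hRa, one_mul]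
    _ = ENNReal.ofReal (R ^ (-a)) * (ENNReal.ofReal (R ^ a) *
        ∫⁻ x in {x : Rn n | R < ‖x‖}, ENNReal.ofReal (‖x‖ ^ (-a))) := by ring
    _ = ENNReal.ofReal (R ^ (-a)) * (ENNReal.ofReal (R ^ (n : ℕ)) *
        ∫⁻ x in {x : Rn n | 1 < ‖x‖}, ENNReal.ofReal (‖x‖ ^ (-a))) := by rw [key]
    _ = ENNReal.ofReal (R ^ ((n : ℝ) - a)) *
        ∫⁻ x in {x : Rn n | 1 < ‖x‖}, ENNReal.ofReal (‖x‖ ^ (-a)) := by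
        rw [← mul_assoc, ← ENNReal.ofReal_mul (Real.rpow_nonneg hR.le _),
          ← Real.rpow_natCast R n, ← Real.rpow_add hR]
        ring_nf

lemma finite_lemma {n : ℕ} {a : ℝ} (ha : (n : ℝ) < a) :
    ∫⁻ x in {x : Rn n | 1 < ‖x‖}, ENNReal.ofReal (‖x‖ ^ (-a)) < ∞ := by
  have hbound : ∀ x ∈ {x : Rn n | 1 < ‖x‖},
      ENNReal.ofReal (‖x‖ ^ (-a)) ≤ ENNReal.ofReal (2 ^ a) *
        ENNReal.ofReal ((1 + ‖x‖) ^ (-a)) := by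
    intro x hx
    have hx1 : (1 : ℝ) < ‖x‖ := hx
    have h2 : (1 + ‖x‖) ^ (-a) ≥ (2 * ‖x‖) ^ (-a) :=
      Real.rpow_le_rpow_of_nonpos (by linarith) (by linarith)
        (by linarith [Nat.cast_nonneg (α := ℝ) n])
    rw [← ENNReal.ofReal_mul (by positivity)]
    refine ENNReal.ofReal_le_ofReal ?_
    have h3 : (2 * ‖x‖) ^ (-a) = 2 ^ (-a) * ‖x‖ ^ (-a) :=
      Real.mul_rpow (by norm_num) (by linarith)
    have h4 : (2:ℝ) ^ a * (2 ^ (-a) * ‖x‖ ^ (-a)) = ‖x‖ ^ (-a) := by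
      rw [← mul_assoc, ← Real.rpow_add (by norm_num), add_neg_cancel, Real.rpow_zero, one_mul]
    calc ‖x‖ ^ (-a) = 2 ^ a * (2 * ‖x‖) ^ (-a) := by rw [h3, h4]
      _ ≤ 2 ^ a * (1 + ‖x‖) ^ (-a) := by
          have : (0:ℝ) < 2 ^ a := Real.rpow_pos_of_pos (by norm_num) a
          nlinarith
  calc ∫⁻ x in {x : Rn n | 1 < ‖x‖}, ENNReal.ofReal (‖x‖ ^ (-a))
      ≤ ∫⁻ x in {x : Rn n | 1 < ‖x‖},
          ENNReal.ofReal (2 ^ a) * ENNReal.ofReal ((1 + ‖x‖) ^ (-a)) :=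
        setLIntegral_mono' (meas_set 1) hbound
    _ ≤ ∫⁻ x : Rn n, ENNReal.ofReal (2 ^ a) * ENNReal.ofReal ((1 + ‖x‖) ^ (-a)) :=
        setLIntegral_le_lintegral _ _
    _ = ENNReal.ofReal (2 ^ a) * ∫⁻ x : Rn n, ENNReal.ofReal ((1 + ‖x‖) ^ (-a)) :=
        lintegral_const_mul' _ _ ENNReal.ofReal_ne_top
    _ < ∞ := by
        refine ENNReal.mul_lt_top ENNReal.ofReal_lt_top ?_
        have := finite_integral_one_add_norm
          (μ := (volume : Measure (Rn n))) (r := a) (by rwa [finrank_euclideanSpace_fin])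
        exact this

end
/-- Hölder's inequality for weak Lorentz spaces with change of
measures fails in general. -/
theorem stmt_2 (n : ℕ) (hn : 1 ≤ n) (p p₁ p₂ : ℝ) (hp₁ : 0 < p₁) (hp₂ : 0 < p₂)
    (hp : 1 / p = 1 / p₁ + 1 / p₂)
    (f g w₁ w₂ w : Rn n → ℝ)
    (hf : ∀ x, f x = if 1 ≤ ‖x‖ then ‖x‖ ^ (-(n : ℝ) / p₁) else 0)
    (hg : ∀ x, g x = if 1 ≤ ‖x‖ then ‖x‖ ^ ((n : ℝ) / p₁) else 0)
    (hw₁ : ∀ x, w₁ x = 1)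
    (hw₂ : ∀ x, w₂ x = if 1 ≤ ‖x‖ then ‖x‖ ^ (-(n : ℝ) * (1 + p₂ / p₁)) else 1)
    (hw : ∀ x, w x = w₁ x ^ (p / p₁) * w₂ x ^ (p / p₂)) :
    wLpInfty p₁ w₁ (ennAbs f) < ∞ ∧ wLpInfty p₂ w₂ (ennAbs g) < ∞ ∧
      wLpInfty p w (ennAbs fun x => f x * g x) = ∞ := by
  have hn0 : (0:ℝ) < n := by exact_mod_cast hn
  have hnne : (n:ℝ) ≠ 0 := hn0.ne'
  haveI : Nontrivial (Rn n) := by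
    refine nontrivial_of_ne (EuclideanSpace.single ⟨0, hn⟩ 1) 0 fun h => ?_
    simpa using congrArg (fun v : Rn n => v ⟨0, hn⟩) h
  refine ⟨?_, ?_, ?_⟩
  · -- Part 1
    set V := volume (Metric.ball (0 : Rn n) 1) with hVdef
    have hV : V ≠ ∞ := measure_ball_lt_top.ne
    refine lt_of_le_of_lt (b := V ^ (1/p₁))
      ?_ (ENNReal.rpow_lt_top_of_nonneg (by positivity) hV)
    rw [wLpInfty]
    refine iSup₂_le fun y hy => ?_
    have hd : distrib w₁ (ennAbs f) y ≤ ENNReal.ofReal (y ^ (-p₁)) * V := by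
      have hsub : {x : Rn n | ENNReal.ofReal y < ennAbs f x} ⊆
          Metric.closedBall 0 (y ^ (-p₁ / (n:ℝ))) := by
        intro x hx
        simp only [mem_setOf_eq, ennAbs] at hx
        have hyf : y < |f x| := (ENNReal.ofReal_lt_ofReal_iff_of_nonneg hy.le).mp hx
        have hx1 : 1 ≤ ‖x‖ := by
          by_contra h
          rw [hf x, if_neg h] at hyf
          simp at hyf; linarith
        have hfx : f x = ‖x‖ ^ (-(n:ℝ) / p₁) := by rw [hf x, if_pos hx1]
        have hfx0 : 0 ≤ f x := hfx ▸ Real.rpow_nonneg (norm_nonneg x) _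
        rw [abs_of_nonneg hfx0, hfx] at hyf
        have hxe : ‖x‖ = (‖x‖ ^ (-(n:ℝ)/p₁)) ^ (-p₁/(n:ℝ)) := by
          rw [← Real.rpow_mul (norm_nonneg x),
            show (-(n:ℝ)/p₁) * (-p₁/(n:ℝ)) = 1 by field_simp, Real.rpow_one]
        rw [Metric.mem_closedBall, dist_zero_right, hxe]
        exact Real.rpow_le_rpow_of_nonpos hy hyf.le
          (div_nonpos_of_nonpos_of_nonneg (by linarith) hn0.le)
      calc distrib w₁ (ennAbs f) y
          = volume {x : Rn n | ENNReal.ofReal y < ennAbs f x} := by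
            simp only [distrib, wSet, hw₁, ENNReal.ofReal_one]
            exact setLIntegral_one _
        _ ≤ volume (Metric.closedBall 0 (y ^ (-p₁ / (n:ℝ)))) := measure_mono hsub
        _ = ENNReal.ofReal (y ^ (-p₁)) * V := by
            rw [Measure.addHaar_closedBall volume 0 (Real.rpow_nonneg hy.le _),
              finrank_euclideanSpace_fin, ← Real.rpow_natCast (y ^ (-p₁/(n:ℝ))) n,
              ← Real.rpow_mul hy.le, show (-p₁/(n:ℝ)) * (n:ℝ) = -p₁ by field_simp]
    calc ENNReal.ofReal y * (distrib w₁ (ennAbs f) y) ^ (1/p₁)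
        ≤ ENNReal.ofReal y * (ENNReal.ofReal (y ^ (-p₁)) * V) ^ (1/p₁) := by
          gcongr
      _ = ENNReal.ofReal y * (ENNReal.ofReal (y ^ (-p₁)) ^ (1/p₁) * V ^ (1/p₁)) := by
          rw [ENNReal.mul_rpow_of_nonneg _ _ (by positivity)]
      _ = V ^ (1/p₁) := by
          rw [ENNReal.ofReal_rpow_of_pos (Real.rpow_pos_of_pos hy _),
            ← Real.rpow_mul hy.le, show -p₁ * (1/p₁) = -1 by field_simp,
            Real.rpow_neg_one, ← mul_assoc, ← ENNReal.ofReal_mul hy.le,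
            mul_inv_cancel₀ hy.ne', ENNReal.ofReal_one, one_mul]
  · -- Part 2
    set a := (n:ℝ) * (1 + p₂/p₁) with ha_def
    have hna : (n:ℝ) < a := by
      have h1 : 0 < p₂/p₁ := by positivity
      rw [ha_def]; nlinarith
    have haneg : -(n:ℝ) * (1 + p₂/p₁) = -a := by rw [ha_def]; ring
    set L1 := ∫⁻ x in {x : Rn n | 1 < ‖x‖}, ENNReal.ofReal (‖x‖ ^ (-a)) with hL1def
    have hL1 : L1 < ∞ := finite_lemma hna
    refine lt_of_le_of_lt (b := L1 ^ (1/p₂))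
      ?_ (ENNReal.rpow_lt_top_of_nonneg (by positivity) hL1.ne)
    rw [wLpInfty]
    refine iSup₂_le fun y hy => ?_
    rcases lt_or_ge y 1 with hy1 | hy1
    · have hsub : {x : Rn n | ENNReal.ofReal y < ennAbs g x} ⊆ {x : Rn n | 1 ≤ ‖x‖} := by
        intro x hx
        simp only [mem_setOf_eq, ennAbs] at hx ⊢
        by_contra h
        rw [hg x, if_neg h] at hx
        simp [ENNReal.ofReal_pos.mpr hy] at hx
      have hd : distrib w₂ (ennAbs g) y ≤ L1 := by
        have h1 : {x : Rn n | 1 ≤ ‖x‖} ⊆ {x : Rn n | 1 < ‖x‖} ∪ {x : Rn n | ‖x‖ = 1} := by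
          intro x hx
          have hx' : (1:ℝ) ≤ ‖x‖ := hx
          rcases lt_or_eq_of_le hx' with h | h
          · exact Or.inl h
          · exact Or.inr h.symm
        calc distrib w₂ (ennAbs g) y
            ≤ ∫⁻ x in {x : Rn n | 1 < ‖x‖} ∪ {x : Rn n | ‖x‖ = 1}, ENNReal.ofReal (w₂ x) := by
              simp only [distrib, wSet]
              exact lintegral_mono_set (hsub.trans h1)
          _ ≤ (∫⁻ x in {x : Rn n | 1 < ‖x‖}, ENNReal.ofReal (w₂ x)) +
              ∫⁻ x in {x : Rn n | ‖x‖ = 1}, ENNReal.ofReal (w₂ x) := lintegral_union_le _ _ _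
          _ = L1 + 0 := by
              congr 1
              · refine setLIntegral_congr_fun (meas_set 1) (fun x hx => ?_)
                rw [hw₂ x, if_pos (le_of_lt hx), haneg]
              · refine setLIntegral_measure_zero _ _ ?_
                have hsph : {x : Rn n | ‖x‖ = 1} = Metric.sphere (0 : Rn n) 1 := by
                  ext x; simp [Metric.mem_sphere, dist_zero_right]
                rw [hsph]
                exact Measure.addHaar_sphere volume 0 1
          _ = L1 := add_zero _
      calc ENNReal.ofReal y * (distrib w₂ (ennAbs g) y) ^ (1/p₂)
          ≤ 1 * L1 ^ (1/p₂) := by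
            gcongr
            exact ENNReal.ofReal_le_one.mpr hy1.le
        _ = L1 ^ (1/p₂) := one_mul _
    · set R := y ^ (p₁/(n:ℝ)) with hRdef
      have hR1 : 1 ≤ R := Real.one_le_rpow hy1 (by positivity)
      have hR0 : 0 < R := lt_of_lt_of_le one_pos hR1
      have hsub : {x : Rn n | ENNReal.ofReal y < ennAbs g x} ⊆ {x : Rn n | R < ‖x‖} := by
        intro x hx
        simp only [mem_setOf_eq, ennAbs] at hx ⊢
        have hyg : y < |g x| := (ENNReal.ofReal_lt_ofReal_iff_of_nonneg hy.le).mp hx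
        have hx1 : 1 ≤ ‖x‖ := by
          by_contra h
          rw [hg x, if_neg h] at hyg
          simp at hyg; linarith
        have hgx : g x = ‖x‖ ^ ((n:ℝ)/p₁) := by rw [hg x, if_pos hx1]
        rw [abs_of_nonneg (hgx ▸ Real.rpow_nonneg (norm_nonneg x) _), hgx] at hyg
        have h2 : R < (‖x‖ ^ ((n:ℝ)/p₁)) ^ (p₁/(n:ℝ)) :=
          Real.rpow_lt_rpow hy.le hyg (by positivity)
        rwa [← Real.rpow_mul (norm_nonneg x),
          show ((n:ℝ)/p₁) * (p₁/(n:ℝ)) = 1 by field_simp, Real.rpow_one] at h2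
      have hd : distrib w₂ (ennAbs g) y ≤ ENNReal.ofReal (R ^ ((n:ℝ) - a)) * L1 := by
        calc distrib w₂ (ennAbs g) y
            ≤ ∫⁻ x in {x : Rn n | R < ‖x‖}, ENNReal.ofReal (w₂ x) := by
              simp only [distrib, wSet]
              exact lintegral_mono_set hsub
          _ = ∫⁻ x in {x : Rn n | R < ‖x‖}, ENNReal.ofReal (‖x‖ ^ (-a)) := by
              refine setLIntegral_congr_fun (meas_set R) (fun x hx => ?_)
              rw [hw₂ x, if_pos (le_trans hR1 (le_of_lt hx)), haneg]
          _ = _ := scale_lemma a hR0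
      calc ENNReal.ofReal y * (distrib w₂ (ennAbs g) y) ^ (1/p₂)
          ≤ ENNReal.ofReal y * (ENNReal.ofReal (R ^ ((n:ℝ) - a)) * L1) ^ (1/p₂) := by gcongr
        _ = ENNReal.ofReal y *
            (ENNReal.ofReal (R ^ ((n:ℝ) - a)) ^ (1/p₂) * L1 ^ (1/p₂)) := by
            rw [ENNReal.mul_rpow_of_nonneg _ _ (by positivity)]
        _ = L1 ^ (1/p₂) := by
            rw [ENNReal.ofReal_rpow_of_pos (Real.rpow_pos_of_pos hR0 _)]
            have hRe : (R ^ ((n:ℝ) - a)) ^ (1/p₂) = y⁻¹ := by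
              rw [hRdef, ← Real.rpow_mul hy.le, ← Real.rpow_mul hy.le,
                show p₁/(n:ℝ) * ((n:ℝ) - a) * (1/p₂) = -1 by rw [ha_def]; field_simp; ring]
              exact Real.rpow_neg_one y
            rw [hRe, ← mul_assoc, ← ENNReal.ofReal_mul hy.le,
              mul_inv_cancel₀ hy.ne', ENNReal.ofReal_one, one_mul]

  · -- Part 3
    have hp0 : 0 < p := by
      have h : 0 < 1/p := by rw [hp]; positivity
      exact one_div_pos.mp h
    set T := ∫⁻ x in {x : Rn n | 1 < ‖x‖}, ENNReal.ofReal (‖x‖ ^ (-(n:ℝ))) with hTdef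
    set A := {x : Rn n | 1 < ‖x‖ ∧ ‖x‖ ≤ 2} with hAdef
    have hTscale : ∫⁻ x in {x : Rn n | 2 < ‖x‖}, ENNReal.ofReal (‖x‖ ^ (-(n:ℝ))) = T := by
      rw [scale_lemma (n:ℝ) (by norm_num : (0:ℝ) < 2), sub_self, Real.rpow_zero,
        ENNReal.ofReal_one, one_mul]
    have hsplit : T = (∫⁻ x in A, ENNReal.ofReal (‖x‖ ^ (-(n:ℝ)))) + T := by
      have hU : A ∪ {x : Rn n | 2 < ‖x‖} = {x : Rn n | 1 < ‖x‖} := by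
        ext x
        simp only [hAdef, mem_union, mem_setOf_eq]
        constructor
        · rintro (⟨h1, _⟩ | h2)
          · exact h1
          · linarith
        · intro h1
          rcases le_or_gt ‖x‖ 2 with h | h
          · exact Or.inl ⟨h1, h⟩
          · exact Or.inr h
      have hdisj : Disjoint A {x : Rn n | 2 < ‖x‖} := by
        rw [Set.disjoint_left]
        rintro x ⟨_, h2⟩ h3
        exact absurd (h3 : (2:ℝ) < ‖x‖) (not_lt.mpr h2)
      conv_lhs => rw [hTdef, ← hU]
      rw [lintegral_union (meas_set 2) hdisj, hTscale]
    have hcpos : 0 < ∫⁻ x in A, ENNReal.ofReal (‖x‖ ^ (-(n:ℝ))) := by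
      obtain ⟨x₀, hx₀⟩ := exists_norm_eq (Rn n) (by norm_num : (0:ℝ) ≤ 3/2)
      have hball : Metric.ball x₀ (1/2) ⊆ A := by
        intro z hz
        rw [Metric.mem_ball, dist_eq_norm] at hz
        have h1 := norm_sub_norm_le z x₀
        have h2 := norm_sub_norm_le x₀ z
        rw [norm_sub_rev] at h2
        constructor
        · linarith
        · linarith
      calc (0:ℝ≥0∞) < ENNReal.ofReal (2 ^ (-(n:ℝ))) * volume (Metric.ball x₀ (1/2)) := by
            refine ENNReal.mul_pos ?_ ?_
            · exact (ENNReal.ofReal_pos.mpr (Real.rpow_pos_of_pos (by norm_num) _)).ne'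
            · exact (Metric.measure_ball_pos volume x₀ (by norm_num : (0:ℝ) < 1/2)).ne'
        _ = ∫⁻ _ in Metric.ball x₀ (1/2), ENNReal.ofReal (2 ^ (-(n:ℝ))) :=
            (setLIntegral_const _ _).symm
        _ ≤ ∫⁻ x in Metric.ball x₀ (1/2), ENNReal.ofReal (‖x‖ ^ (-(n:ℝ))) := by
            refine setLIntegral_mono' measurableSet_ball fun x hx => ?_
            have hx2 : ‖x‖ ≤ 2 := (hball hx).2
            have hx1 : (1:ℝ) < ‖x‖ := (hball hx).1
            exact ENNReal.ofReal_le_ofReal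
              (Real.rpow_le_rpow_of_nonpos (by linarith) hx2 (by linarith))
        _ ≤ ∫⁻ x in A, ENNReal.ofReal (‖x‖ ^ (-(n:ℝ))) := lintegral_mono_set hball
    have hT : T = ∞ := by
      by_contra h
      have h0 : (0 : ℝ≥0∞) + T = (∫⁻ x in A, ENNReal.ofReal (‖x‖ ^ (-(n:ℝ)))) + T := by
        rw [zero_add, ← hsplit]
      exact absurd ((ENNReal.add_left_inj h).mp h0).symm hcpos.ne'
    have hmem : {x : Rn n | 1 < ‖x‖} ⊆
        {x : Rn n | ENNReal.ofReal (1/2) < ennAbs (fun x => f x * g x) x} := by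
      intro x hx
      have hx1 : (1:ℝ) ≤ ‖x‖ := le_of_lt hx
      have hfg : f x * g x = 1 := by
        rw [hf x, hg x, if_pos hx1, if_pos hx1,
          ← Real.rpow_add (lt_of_lt_of_le one_pos hx1)]
        rw [show -(n:ℝ)/p₁ + (n:ℝ)/p₁ = 0 by ring, Real.rpow_zero]
      simp only [mem_setOf_eq, ennAbs, hfg, abs_one, ENNReal.ofReal_one]
      exact ENNReal.ofReal_lt_one.mpr (by norm_num)
    have hip : p * (1/p₁ + 1/p₂) = 1 := by rw [← hp, mul_one_div, div_self hp0.ne']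
    have hwx : ∀ x ∈ {x : Rn n | 1 < ‖x‖},
        ENNReal.ofReal (w x) = ENNReal.ofReal (‖x‖ ^ (-(n:ℝ))) := by
      intro x hx
      have hx1 : (1:ℝ) ≤ ‖x‖ := le_of_lt hx
      have hpe : (-(n:ℝ) * (1 + p₂/p₁)) * (p/p₂) = -(n:ℝ) := by
        have h2 : (-(n:ℝ) * (1 + p₂/p₁)) * (p/p₂) = -(n:ℝ) * (p * (1/p₁ + 1/p₂)) := by
          field_simp
          ring
        rw [h2, hip, mul_one]
      rw [hw x, hw₁ x, hw₂ x, if_pos hx1, Real.one_rpow, one_mul,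
        ← Real.rpow_mul (norm_nonneg x), hpe]
    have hdist : distrib w (ennAbs fun x => f x * g x) (1/2) = ∞ := by
      rw [eq_top_iff, ← hT, hTdef]
      calc ∫⁻ x in {x : Rn n | 1 < ‖x‖}, ENNReal.ofReal (‖x‖ ^ (-(n:ℝ)))
          = ∫⁻ x in {x : Rn n | 1 < ‖x‖}, ENNReal.ofReal (w x) :=
            (setLIntegral_congr_fun (meas_set 1) hwx).symm
        _ ≤ distrib w (ennAbs fun x => f x * g x) (1/2) := by
            simp only [distrib, wSet]
            exact lintegral_mono_set hmem
    rw [eq_top_iff]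
    calc (⊤:ℝ≥0∞)
        = ENNReal.ofReal (1/2) *
            (distrib w (ennAbs fun x => f x * g x) (1/2)) ^ (1/p) := by
          rw [hdist, ENNReal.top_rpow_of_pos (by positivity),
            ENNReal.mul_top (ENNReal.ofReal_pos.mpr (by norm_num)).ne']
      _ ≤ wLpInfty p w (ennAbs fun x => f x * g x) := by
          rw [wLpInfty]
          exact le_iSup₂ (f := fun (y : ℝ) (_ : 0 < y) => ENNReal.ofReal y *
            (distrib w (ennAbs fun x => f x * g x) y) ^ (1/p)) (1/2) (by norm_num)
end

section
/- Let 0 < p1, p2 < ∞, 1/p = 1/p1 + 1/p2, let w1, w2 be weights on ℝⁿ, and set w := w1^{p/p1}·w2^{p/p2}. If F is a measurable function with ‖F‖_∞ ≤ 1 and g is any measurable function, then sup_{0<t<1} t·‖χ_{{|F|>t}} g‖_{L^{p,∞}(w)} ≤ ‖F‖_{L^{p1,∞}(w1)} ‖g‖_{L^{p2,∞}(w2)}. -/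
open MeasureTheory ENNReal Set

lemma holder_wSet {n : ℕ} (p p₁ p₂ : ℝ) (hp₁ : 0 < p₁) (hp₂ : 0 < p₂) (hp0 : 0 < p)
    (hθ : p / p₁ + p / p₂ = 1)
    (w₁ w₂ w : Rn n → ℝ) (h1pos : ∀ x, 0 < w₁ x) (h2pos : ∀ x, 0 < w₂ x)
    (hw : ∀ x, w x = w₁ x ^ (p / p₁) * w₂ x ^ (p / p₂))
    (hm₁ : AEMeasurable w₁ (volume : Measure (Rn n)))
    (hm₂ : AEMeasurable w₂ (volume : Measure (Rn n)))
    (A : Set (Rn n)) :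
    wSet w A ≤ (wSet w₁ A) ^ (p / p₁) * (wSet w₂ A) ^ (p / p₂) := by
  have hθ₁ : 0 < p / p₁ := div_pos hp0 hp₁
  have hθ₂ : 0 < p / p₂ := div_pos hp0 hp₂
  have hθ₁1 : p / p₁ < 1 := by linarith
  have hconj : (p₁ / p).HolderConjugate (p₂ / p) := by
    refine Real.holderConjugate_iff.mpr ⟨?_, ?_⟩
    · exact (one_lt_div hp0).mpr ((div_lt_one hp₁).mp hθ₁1)
    · rw [inv_div, inv_div]
      exact hθ
  have key : ∀ x, ENNReal.ofReal (w x) =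
      (ENNReal.ofReal (w₁ x)) ^ (p / p₁) * (ENNReal.ofReal (w₂ x)) ^ (p / p₂) := by
    intro x
    rw [hw x, ENNReal.ofReal_mul (Real.rpow_nonneg (h1pos x).le _),
      ENNReal.ofReal_rpow_of_pos (h1pos x), ENNReal.ofReal_rpow_of_pos (h2pos x)]
  calc wSet w A = ∫⁻ x in A, ((fun x => (ENNReal.ofReal (w₁ x)) ^ (p / p₁)) *
        (fun x => (ENNReal.ofReal (w₂ x)) ^ (p / p₂))) x := by
        simp only [wSet, Pi.mul_apply]
        exact lintegral_congr fun x => key x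
    _ ≤ (∫⁻ x in A, ((ENNReal.ofReal (w₁ x)) ^ (p / p₁)) ^ (p₁ / p)) ^ (1 / (p₁ / p)) *
        (∫⁻ x in A, ((ENNReal.ofReal (w₂ x)) ^ (p / p₂)) ^ (p₂ / p)) ^ (1 / (p₂ / p)) := by
        apply ENNReal.lintegral_mul_le_Lp_mul_Lq _ hconj
        · exact (hm₁.restrict.ennreal_ofReal).pow_const _
        · exact (hm₂.restrict.ennreal_ofReal).pow_const _
    _ = (wSet w₁ A) ^ (p / p₁) * (wSet w₂ A) ^ (p / p₂) := by
        have e1 : (p / p₁) * (p₁ / p) = 1 := by field_simp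
        have e2 : (p / p₂) * (p₂ / p) = 1 := by field_simp
        have d1 : 1 / (p₁ / p) = p / p₁ := by rw [one_div, inv_div]
        have d2 : 1 / (p₂ / p) = p / p₂ := by rw [one_div, inv_div]
        simp_rw [← ENNReal.rpow_mul, e1, e2, ENNReal.rpow_one, d1, d2, wSet]

/-- restricted Hölder inequality for the level sets of a bounded function. -/
theorem stmt_4 {n : ℕ} (p p₁ p₂ : ℝ) (hp₁ : 0 < p₁) (hp₂ : 0 < p₂)
    (hp : 1 / p = 1 / p₁ + 1 / p₂)
    (w₁ w₂ : Rn n → ℝ) (hw₁ : IsWeight w₁) (hw₂ : IsWeight w₂)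
    (w : Rn n → ℝ) (hw : ∀ x, w x = w₁ x ^ (p / p₁) * w₂ x ^ (p / p₂))
    (F g : Rn n → ℝ) (hF : Measurable F) (hg : Measurable g)
    (hF1 : ∀ᵐ x ∂(volume : Measure (Rn n)), |F x| ≤ 1) :
    (⨆ (t : ℝ) (_ : 0 < t) (_ : t < 1),
        ENNReal.ofReal t * wLpInfty p w ({x | t < |F x|}.indicator (ennAbs g))) ≤
      wLpInfty p₁ w₁ (ennAbs F) * wLpInfty p₂ w₂ (ennAbs g) := by
  have hp0 : 0 < p := by
    have h : 0 < 1 / p := by rw [hp]; positivity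
    exact one_div_pos.mp h
  have hθ : p / p₁ + p / p₂ = 1 := by
    have h : p / p₁ + p / p₂ = p * (1 / p₁ + 1 / p₂) := by ring
    rw [h, ← hp, mul_one_div, div_self hp0.ne']
  refine iSup_le fun t => iSup_le fun ht => iSup_le fun ht1 => ?_
  rw [wLpInfty, ENNReal.mul_iSup]
  refine iSup_le fun y => ?_
  rw [ENNReal.mul_iSup]
  refine iSup_le fun hy => ?_
  set S : Set (Rn n) := {x | t < |F x|} with hS
  set T : Set (Rn n) := {x | ENNReal.ofReal y < ennAbs g x} with hT
  have hA : {x | ENNReal.ofReal y < S.indicator (ennAbs g) x} = S ∩ T := by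
    ext x
    by_cases hx : x ∈ S <;>
      simp [Set.indicator_apply, hx, hT, (ENNReal.ofReal_pos.mpr hy).not_gt]
  have hwSA : distrib w (S.indicator (ennAbs g)) y ≤
      (wSet w₁ S) ^ (p / p₁) * (wSet w₂ T) ^ (p / p₂) := by
    calc distrib w (S.indicator (ennAbs g)) y
        ≤ (wSet w₁ (S ∩ T)) ^ (p / p₁) * (wSet w₂ (S ∩ T)) ^ (p / p₂) := by
          rw [distrib, hA]
          exact holder_wSet p p₁ p₂ hp₁ hp₂ hp0 hθ w₁ w₂ w hw₁.1 hw₂.1 hw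
            hw₁.2.aestronglyMeasurable.aemeasurable hw₂.2.aestronglyMeasurable.aemeasurable _
      _ ≤ (wSet w₁ S) ^ (p / p₁) * (wSet w₂ T) ^ (p / p₂) := by
          gcongr
          · exact lintegral_mono_set inter_subset_left
          · exact lintegral_mono_set inter_subset_right
  have hS' : distrib w₁ (ennAbs F) t = wSet w₁ S := by
    rw [distrib, hS]
    congr 1
    ext x
    simp [ennAbs, ENNReal.ofReal_lt_ofReal_iff_of_nonneg ht.le]
  have hT' : distrib w₂ (ennAbs g) y = wSet w₂ T := rfl
  calc ENNReal.ofReal t * (ENNReal.ofReal y * distrib w (S.indicator (ennAbs g)) y ^ (1 / p))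
      ≤ ENNReal.ofReal t * (ENNReal.ofReal y *
          ((wSet w₁ S) ^ (p / p₁) * (wSet w₂ T) ^ (p / p₂)) ^ (1 / p)) := by
        gcongr
    _ = (ENNReal.ofReal t * (wSet w₁ S) ^ (1 / p₁)) *
        (ENNReal.ofReal y * (wSet w₂ T) ^ (1 / p₂)) := by
        rw [ENNReal.mul_rpow_of_nonneg _ _ (by positivity : (0:ℝ) ≤ 1 / p),
          ← ENNReal.rpow_mul, ← ENNReal.rpow_mul]
        have e1 : (p / p₁) * (1 / p) = 1 / p₁ := by field_simp
        have e2 : (p / p₂) * (1 / p) = 1 / p₂ := by field_simp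
        rw [e1, e2]; ring
    _ ≤ wLpInfty p₁ w₁ (ennAbs F) * wLpInfty p₂ w₂ (ennAbs g) := by
        apply mul_le_mul'
        · rw [← hS']
          exact le_iSup₂ (f := fun (y : ℝ) (_ : 0 < y) =>
            ENNReal.ofReal y * (distrib w₁ (ennAbs F) y) ^ (1 / p₁)) t ht
        · rw [← hT']
          exact le_iSup₂ (f := fun (z : ℝ) (_ : 0 < z) =>
            ENNReal.ofReal z * (distrib w₂ (ennAbs g) z) ^ (1 / p₂)) y hy
end

section
/- Let 0 < p1, p2 < ∞, 1/p = 1/p1 + 1/p2, let w1, w2 be weights on ℝⁿ, and set w := w1^{p/p1}·w2^{p/p2}. For every 0 < δ < 1 there exists a constant C(p,δ) > 0, depending only on p and δ, such that for all measurable functions f, g with ‖f‖_∞ ≤ 1, ‖fg‖_{L^{p,∞}(w)} ≤ C(p,δ) ‖|f|^δ‖_{L^{p1,∞}(w1)} ‖g‖_{L^{p2,∞}(w2)}; one may take C(p,δ) = inf_{0<q<p} 2·(p / ((log 2)(1−δ) q (p−q)))^{1/q}. -/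
open MeasureTheory ENNReal Set

section RealAux
lemma mul_log_ge (t : ℝ) (ht : 0 < t) : -(Real.exp 1)⁻¹ ≤ t * Real.log t := by
  rcases le_or_gt 1 t with h | h
  · have h1 : 0 ≤ Real.log t := Real.log_nonneg h
    nlinarith [Real.exp_pos 1, inv_pos.mpr (Real.exp_pos 1)]
  · have hu : Real.log t < 0 := Real.log_neg ht h
    have key : (-1 - Real.log t) + 1 ≤ Real.exp (-1 - Real.log t) := by
      linarith [Real.add_one_le_exp (-1 - Real.log t)]
    have heq : Real.exp (-1 - Real.log t) = (Real.exp 1)⁻¹ / t := by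
      rw [Real.exp_sub, Real.exp_neg, Real.exp_log ht]
    rw [heq] at key
    have h2 : -Real.log t ≤ (Real.exp 1)⁻¹ / t := by linarith
    have h3 : t * (-Real.log t) ≤ (Real.exp 1)⁻¹ := by
      rw [mul_comm]; exact (le_div_iff₀ ht).mp h2
    nlinarith

lemma core_ineq (s m : ℝ) (hs : 0 < s) (hm : 1 < m) :
    1 ≤ (m^2/((m-1)*s)) ^ m * (Real.exp s - 1) := by
  have hm1 : 0 < m - 1 := by linarith
  have hK : 0 < m^2/((m-1)*s) := by positivity
  have hKs : 4/s ≤ m^2/((m-1)*s) := by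
    rw [div_le_div_iff₀ (by positivity) (by positivity)]
    nlinarith [sq_nonneg (m-2)]
  have hexp : s ≤ Real.exp s - 1 := by linarith [Real.add_one_le_exp s]
  rcases le_or_gt s 4 with hcase | hcase
  · -- K ≥ 1, K^m ≥ K ≥ 4/s, (exp s - 1) ≥ s
    have hK1 : 1 ≤ m^2/((m-1)*s) := le_trans (by rw [le_div_iff₀ hs]; linarith) hKs
    have h2 : m^2/((m-1)*s) ≤ (m^2/((m-1)*s)) ^ m := by
      calc m^2/((m-1)*s) = (m^2/((m-1)*s)) ^ (1:ℝ) := (Real.rpow_one _).symm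
        _ ≤ _ := Real.rpow_le_rpow_of_exponent_le hK1 (by linarith)
    have h3 : (4/s) * s ≤ (m^2/((m-1)*s)) ^ m * (Real.exp s - 1) := by
      apply mul_le_mul (le_trans hKs h2) hexp (le_of_lt hs) (by positivity)
    rw [div_mul_cancel₀] at h3 <;> [linarith; exact ne_of_gt hs]
  · -- s > 4
    have he2 : (2:ℝ) ≤ Real.exp s := by
      have : (2:ℝ) ≤ Real.exp 1 := by linarith [Real.add_one_le_exp 1]
      calc (2:ℝ) ≤ Real.exp 1 := this
        _ ≤ Real.exp s := Real.exp_le_exp.mpr (by linarith)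
    have hhalf : Real.exp s / 2 ≤ Real.exp s - 1 := by linarith
    have hKdef : m^2/((m-1)*s) = (m/(m-1)) * (m/s) := by field_simp
    have hlogK : Real.log (m^2/((m-1)*s)) = Real.log (m/(m-1)) + Real.log (m/s) := by
      rw [hKdef, Real.log_mul (by positivity) (by positivity)]
    have hc1 : 1 ≤ m * Real.log (m/(m-1)) := by
      have := Real.log_le_sub_one_of_pos (show 0 < (m-1)/m by positivity)
      have hrev : Real.log ((m-1)/m) = - Real.log (m/(m-1)) := by
        rw [← Real.log_inv]; congr 1; field_simp
      rw [hrev] at this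
      have h1m : (m-1)/m - 1 = -(1/m) := by field_simp; ring
      rw [h1m] at this
      have : 1/m ≤ Real.log (m/(m-1)) := by linarith
      calc (1:ℝ) = m * (1/m) := by field_simp
        _ ≤ m * Real.log (m/(m-1)) := by
            apply mul_le_mul_of_nonneg_left this (by linarith)
    have hc2 : -(s * (Real.exp 1)⁻¹) ≤ m * Real.log (m/s) := by
      have := mul_log_ge (m/s) (by positivity)
      have heq : m * Real.log (m/s) = s * ((m/s) * Real.log (m/s)) := by
        field_simp
      rw [heq]
      nlinarith [this]
    have hlog2 : Real.log 2 ≤ 1 := by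
      linarith [Real.log_le_sub_one_of_pos (show (0:ℝ) < 2 by norm_num)]
    have hinv : s * (Real.exp 1)⁻¹ ≤ s := by
      have h1 : 1 ≤ Real.exp 1 := by linarith [Real.add_one_le_exp 1]
      have : (Real.exp 1)⁻¹ ≤ 1 := by
        rw [inv_le_one_iff₀]; right; exact h1
      nlinarith
    have hsum : 0 ≤ Real.log (m^2/((m-1)*s)) * m + (s - Real.log 2) := by
      rw [hlogK, add_mul]
      have e1 : Real.log (m/(m-1)) * m = m * Real.log (m/(m-1)) := mul_comm _ _
      have e2 : Real.log (m/s) * m = m * Real.log (m/s) := mul_comm _ _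
      rw [e1, e2]
      nlinarith
    have key : (1:ℝ) ≤ (m^2/((m-1)*s)) ^ m * (Real.exp s / 2) := by
      rw [Real.rpow_def_of_pos hK]
      have : Real.exp s / 2 = Real.exp (s - Real.log 2) := by
        rw [Real.exp_sub, Real.exp_log (by norm_num : (0:ℝ) < 2)]
      rw [this, ← Real.exp_add]
      calc (1:ℝ) = Real.exp 0 := Real.exp_zero.symm
        _ ≤ _ := Real.exp_le_exp.mpr (by linarith)
    calc (1:ℝ) ≤ (m^2/((m-1)*s)) ^ m * (Real.exp s / 2) := key
      _ ≤ _ := by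
          apply mul_le_mul_of_nonneg_left hhalf (by positivity)

lemma const_ineq (p δ q : ℝ) (hp : 0 < p) (hδ0 : 0 < δ) (hδ1 : δ < 1)
    (hq0 : 0 < q) (hqp : q < p) :
    (2:ℝ) ^ (δ*p) / (1 - (2:ℝ) ^ (-(p*(1-δ)))) ≤
      (2 * (p/(Real.log 2 * (1-δ)*q*(p-q))) ^ (1/q)) ^ p := by
  have hlog2 : 0 < Real.log 2 := Real.log_pos (by norm_num)
  set x := p*(1-δ) with hx
  have hx0 : 0 < x := _root_.mul_pos hp (by linarith)
  set s := x * Real.log 2 with hs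
  have hs0 : 0 < s := by positivity
  have hm : 1 < p/q := (one_lt_div hq0).mpr hqp
  set m := p/q with hmdef
  have hpq : 0 < p - q := by linarith
  have hd1 : (1:ℝ) - δ ≠ 0 := by linarith
  have hden : (0:ℝ) < Real.log 2 * (1-δ)*q*(p-q) := by
    have h1δ : (0:ℝ) < 1 - δ := by linarith
    have hpq' : (0:ℝ) < p - q := by linarith
    positivity
  have hKeq : p/(Real.log 2 * (1-δ)*q*(p-q)) = m^2/((m-1)*s) := by
    rw [hmdef, hs, hx]
    have hpos : (0:ℝ) < (p/q - 1) * (p*(1-δ)*Real.log 2) := by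
      apply _root_.mul_pos _ (by positivity)
      rw [sub_pos, lt_div_iff₀ hq0, one_mul]; exact hqp
    rw [div_eq_div_iff (ne_of_gt hden) (ne_of_gt hpos)]
    field_simp
  have hcore := core_ineq s m hs0 hm
  rw [← hKeq] at hcore
  set K := p/(Real.log 2 * (1-δ)*q*(p-q)) with hKdef
  have hK0 : 0 < K := by
    rw [hKeq]
    apply div_pos (by positivity)
    apply _root_.mul_pos _ hs0
    linarith
  have h2x : Real.exp s = (2:ℝ) ^ x := by
    rw [Real.rpow_def_of_pos (by norm_num : (0:ℝ) < 2), hs, mul_comm]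
  rw [h2x] at hcore
  have h2x1 : 1 < (2:ℝ) ^ x := Real.one_lt_rpow_iff_of_pos (by norm_num) |>.mpr (by norm_num; exact hx0)
  have hRHS : (2 * K ^ (1/q)) ^ p = (2:ℝ)^p * K ^ m := by
    rw [Real.mul_rpow (by norm_num) (le_of_lt (Real.rpow_pos_of_pos hK0 _)),
      ← Real.rpow_mul hK0.le, hmdef, div_mul_eq_mul_div, one_mul]
  rw [hRHS]
  have hneg : (2:ℝ) ^ (-x) = ((2:ℝ)^x)⁻¹ := by
    rw [Real.rpow_neg (by norm_num : (0:ℝ) ≤ 2)]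
  rw [hneg]
  have hdenom : 1 - ((2:ℝ)^x)⁻¹ = ((2:ℝ)^x - 1)/(2:ℝ)^x := by
    field_simp
  rw [hdenom, div_div_eq_mul_div, div_le_iff₀ (by linarith : (0:ℝ) < 2^x - 1)]
  have hsplit : (2:ℝ) ^ (δ*p) * (2:ℝ) ^ x = (2:ℝ) ^ p := by
    rw [← Real.rpow_add (by norm_num : (0:ℝ) < 2), hx]; ring_nf
  rw [hsplit]
  have h2p : (0:ℝ) < (2:ℝ)^p := Real.rpow_pos_of_pos (by norm_num) _
  nlinarith [hcore, h2p]
lemma term_eq (p δ y : ℝ) (hδ0 : 0 < δ) (hy : 0 < y) (k : ℕ) :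
    ((((2:ℝ)^(-((k:ℝ)+1)))^δ)⁻¹)^p * ((((2:ℝ)^((k:ℝ)))*y)⁻¹)^p
      = ((2:ℝ)^(δ*p) * y^(-p)) * ((2:ℝ)^(-(p*(1-δ))))^k := by
  have h2 : (0:ℝ) < 2 := two_pos
  have e1 : ((((2:ℝ)^(-((k:ℝ)+1)))^δ)⁻¹)^p = (2:ℝ)^(((k:ℝ)+1)*δ*p) := by
    rw [← Real.rpow_mul h2.le, ← Real.rpow_neg h2.le, ← Real.rpow_mul h2.le]
    congr 1; ring
  have e2 : ((((2:ℝ)^((k:ℝ)))*y)⁻¹)^p = (2:ℝ)^(-((k:ℝ)*p)) * y^(-p) := by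
    rw [mul_inv, Real.mul_rpow (by positivity) (by positivity),
      Real.inv_rpow (by positivity), ← Real.rpow_mul h2.le, ← Real.rpow_neg h2.le,
      Real.inv_rpow hy.le, ← Real.rpow_neg hy.le]
  have e3 : ((2:ℝ)^(-(p*(1-δ))))^k = (2:ℝ)^(-(p*(1-δ))*(k:ℝ)) := by
    rw [← Real.rpow_natCast ((2:ℝ)^(-(p*(1-δ)))) k, ← Real.rpow_mul h2.le]
  rw [e1, e2, e3]
  calc (2:ℝ)^(((k:ℝ)+1)*δ*p) * ((2:ℝ)^(-((k:ℝ)*p)) * y^(-p))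
      = ((2:ℝ)^(((k:ℝ)+1)*δ*p) * (2:ℝ)^(-((k:ℝ)*p))) * y^(-p) := by ring
    _ = (2:ℝ)^(((k:ℝ)+1)*δ*p + -((k:ℝ)*p)) * y^(-p) := by rw [← Real.rpow_add h2]
    _ = ((2:ℝ)^(δ*p) * (2:ℝ)^(-(p*(1-δ))*(k:ℝ))) * y^(-p) := by
        rw [← Real.rpow_add h2]; congr 1; ring
    _ = (2:ℝ)^(δ*p) * y^(-p) * (2:ℝ)^(-(p*(1-δ))*(k:ℝ)) := by ring

end RealAux

section MeasAux
open Filter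

lemma wSet_mono {n : ℕ} (v : Rn n → ℝ) {S T : Set (Rn n)} (h : S ⊆ T) :
    wSet v S ≤ wSet v T :=
  lintegral_mono_set h

lemma wSet_null {n : ℕ} (v : Rn n → ℝ) {S : Set (Rn n)} (h : volume S = 0) :
    wSet v S = 0 :=
  setLIntegral_measure_zero _ _ h

lemma le_wLpInfty {n : ℕ} (p : ℝ) (v : Rn n → ℝ) (h : Rn n → ℝ≥0∞) {t : ℝ} (ht : 0 < t) :
    ENNReal.ofReal t * (distrib v h t) ^ (1/p) ≤ wLpInfty p v h :=
  le_iSup₂ (f := fun y (_ : 0 < y) => ENNReal.ofReal y * (distrib v h y) ^ (1/p)) t ht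

lemma distrib_le {n : ℕ} {p : ℝ} (hp : 0 < p) (v : Rn n → ℝ) (h : Rn n → ℝ≥0∞)
    {t : ℝ} (ht : 0 < t) {A : ℝ≥0∞} (hA : wLpInfty p v h ≤ A) :
    distrib v h t ≤ (A / ENNReal.ofReal t) ^ p := by
  have h1 := le_wLpInfty p v h ht
  have ht0 : ENNReal.ofReal t ≠ 0 := by
    simp only [ne_eq, ENNReal.ofReal_eq_zero, not_le]; exact ht
  have h2 : (distrib v h t) ^ (1/p) ≤ A / ENNReal.ofReal t := by
    rw [ENNReal.le_div_iff_mul_le (Or.inl ht0) (Or.inl ENNReal.ofReal_ne_top), mul_comm]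
    exact h1.trans hA
  calc distrib v h t = ((distrib v h t) ^ (1/p)) ^ p := by
        rw [← ENNReal.rpow_mul, one_div, inv_mul_cancel₀ (ne_of_gt hp), ENNReal.rpow_one]
    _ ≤ _ := ENNReal.rpow_le_rpow h2 (le_of_lt hp)

lemma ae_zero_of_wLpInfty_zero {n : ℕ} {p : ℝ} (hp : 0 < p) {v : Rn n → ℝ}
    (hv : IsWeight v) {h : Rn n → ℝ≥0∞} (h0 : wLpInfty p v h = 0) :
    ∀ᵐ x ∂(volume : Measure (Rn n)), h x = 0 := by
  have hnull : ∀ t : ℝ, 0 < t → volume {x | ENNReal.ofReal t < h x} = 0 := by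
    intro t ht
    have h1 : ENNReal.ofReal t * (distrib v h t) ^ (1/p) = 0 :=
      le_antisymm (h0 ▸ le_wLpInfty p v h ht) (zero_le)
    have ht0 : ENNReal.ofReal t ≠ 0 := by
      simp only [ne_eq, ENNReal.ofReal_eq_zero, not_le]; exact ht
    have h2 : distrib v h t = 0 := by
      rcases mul_eq_zero.mp h1 with h' | h'
      · exact absurd h' ht0
      · have := ENNReal.rpow_eq_zero_iff.mp h'
        rcases this with ⟨h'', _⟩ | ⟨_, h''⟩
        · exact h''
        · exact absurd h'' (by simp [one_div]; positivity)
    -- distrib = ∫⁻ in E, ofReal (v x) = 0 with v > 0 implies volume E = 0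
    have hmeas : AEMeasurable (fun x => ENNReal.ofReal (v x))
        ((volume : Measure (Rn n)).restrict {x | ENNReal.ofReal t < h x}) :=
      (ENNReal.measurable_ofReal.comp_aemeasurable
        hv.2.aestronglyMeasurable.aemeasurable).restrict
    have h3 := (lintegral_eq_zero_iff' hmeas).mp h2
    have h4 : {x : Rn n | ¬ (fun x => ENNReal.ofReal (v x)) x = (0 : Rn n → ℝ≥0∞) x} = univ := by
      ext x; simp only [Pi.zero_apply, mem_setOf_eq, mem_univ, iff_true]
      simp only [ne_eq, ENNReal.ofReal_eq_zero, not_le]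
      exact hv.1 x
    have h5 := ae_iff.mp h3
    rw [h4] at h5
    rwa [Measure.restrict_apply_univ] at h5
  have hsub : {x : Rn n | h x ≠ 0} ⊆ ⋃ k : ℕ, {x | ENNReal.ofReal (1/((k:ℝ)+1)) < h x} := by
    intro x hx
    simp only [mem_setOf_eq, ne_eq] at hx
    have hpos : 0 < h x := pos_iff_ne_zero.mpr hx
    rcases eq_or_ne (h x) ∞ with htop | htop
    · exact mem_iUnion.mpr ⟨0, by simp [htop]⟩
    · obtain ⟨k, hk⟩ := exists_nat_one_div_lt (ENNReal.toReal_pos hx htop)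
      refine mem_iUnion.mpr ⟨k, ?_⟩
      simp only [mem_setOf_eq]
      calc ENNReal.ofReal (1/((k:ℝ)+1)) < ENNReal.ofReal ((h x).toReal) :=
            ENNReal.ofReal_lt_ofReal_iff (ENNReal.toReal_pos hx htop) |>.mpr hk
        _ = h x := ENNReal.ofReal_toReal htop
  have : volume {x : Rn n | h x ≠ 0} = 0 := by
    apply measure_mono_null hsub
    apply measure_iUnion_null
    intro k
    exact hnull _ (by positivity)
  exact ae_iff.mpr this

end MeasAux

section EstD
open Filter

lemma est_D {n : ℕ} (p p₁ p₂ δ : ℝ) (hp : 0 < p) (hp₁ : 0 < p₁) (hp₂ : 0 < p₂)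
    (hsum : p/p₁ + p/p₂ = 1) (hδ0 : 0 < δ) (hδ1 : δ < 1)
    (w₁ w₂ : Rn n → ℝ) (hw₁ : IsWeight w₁) (hw₂ : IsWeight w₂)
    (f g : Rn n → ℝ) (hf1 : ∀ᵐ x ∂(volume : Measure (Rn n)), |f x| ≤ 1)
    (A B : ℝ≥0∞) (hA : wLpInfty p₁ w₁ (fun x => ENNReal.ofReal (|f x| ^ δ)) ≤ A)
    (hB : wLpInfty p₂ w₂ (ennAbs g) ≤ B)
    {y : ℝ} (hy : 0 < y) :
    ENNReal.ofReal y * (distrib (fun x => w₁ x ^ (p/p₁) * w₂ x ^ (p/p₂))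
        (ennAbs fun x => f x * g x) y) ^ (1/p) ≤
      ENNReal.ofReal (((2:ℝ)^(δ*p) / (1 - (2:ℝ)^(-(p*(1-δ)))))^(1/p)) * (A * B) := by
  classical
  set w : Rn n → ℝ := fun x => w₁ x ^ (p/p₁) * w₂ x ^ (p/p₂) with hw
  set E : Set (Rn n) := {x | ENNReal.ofReal y < ennAbs (fun x => f x * g x) x} with hE
  set N : Set (Rn n) := {x | ¬ |f x| ≤ 1} with hN
  have hNnull : volume N = 0 := ae_iff.mp hf1
  set Ek : ℕ → Set (Rn n) := fun k =>
    {x | ENNReal.ofReal y < ENNReal.ofReal |f x * g x| ∧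
      (2:ℝ)^(-((k:ℝ)+1)) < |f x| ∧ |f x| ≤ (2:ℝ)^(-(k:ℝ))} with hEk
  -- covering
  have hcov : E ⊆ (⋃ k, Ek k) ∪ N := by
    intro x hx
    by_cases hxN : x ∈ N
    · exact Or.inr hxN
    · left
      simp only [hN, mem_setOf_eq, not_not, not_le] at hxN
      push_neg at hxN
      have hx' : ENNReal.ofReal y < ENNReal.ofReal |f x * g x| := hx
      have hygt : y < |f x * g x| := by
        by_contra hcon
        push_neg at hcon
        exact absurd (lt_of_lt_of_le hx' (ENNReal.ofReal_le_ofReal hcon)) (lt_irrefl _)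
      have hfne : 0 < |f x| := by
        rcases eq_or_ne (f x) 0 with h0 | h0
        · exfalso; rw [h0] at hygt; simp at hygt; linarith
        · exact abs_pos.mpr h0
      have hex : ∃ k : ℕ, (2:ℝ)^(-((k:ℝ)+1)) < |f x| := by
        obtain ⟨j, hj⟩ := exists_pow_lt_of_lt_one hfne (by norm_num : (1/2:ℝ) < 1)
        refine ⟨j, lt_of_le_of_lt ?_ hj⟩
        have heq : ((1:ℝ)/2)^j = (2:ℝ)^(-(j:ℝ)) := by
          rw [Real.rpow_neg (by norm_num : (0:ℝ) ≤ 2), Real.rpow_natCast, one_div, inv_pow]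
        rw [heq]
        apply Real.rpow_le_rpow_of_exponent_le (by norm_num)
        linarith
      have hklt : (2:ℝ)^(-((Nat.find hex:ℝ)+1)) < |f x| := Nat.find_spec hex
      have hkub : |f x| ≤ (2:ℝ)^(-(Nat.find hex:ℝ)) := by
        rcases Nat.eq_zero_or_pos (Nat.find hex) with h0 | hpos
        · rw [h0]; simpa using hxN
        · have hmin := Nat.find_min hex (Nat.sub_lt hpos one_pos)
          push_neg at hmin
          have hcast : ((Nat.find hex - 1 : ℕ):ℝ) + 1 = (Nat.find hex : ℝ) := by
            rw [Nat.cast_sub hpos]; push_cast; ring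
          rw [← hcast]
          exact hmin
      exact mem_iUnion.mpr ⟨Nat.find hex, ⟨hx', hklt, hkub⟩⟩
  -- positivity facts
  have h2 : (0:ℝ) < 2 := two_pos
  have hu : ∀ k : ℕ, (0:ℝ) < ((2:ℝ)^(-((k:ℝ)+1)))^δ :=
    fun k => Real.rpow_pos_of_pos (Real.rpow_pos_of_pos h2 _) δ
  have hv : ∀ k : ℕ, (0:ℝ) < (2:ℝ)^((k:ℝ)) * y :=
    fun k => _root_.mul_pos (Real.rpow_pos_of_pos h2 _) hy
  -- subset bounds
  have hsub1 : ∀ k, Ek k ⊆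
      {x | ENNReal.ofReal (((2:ℝ)^(-((k:ℝ)+1)))^δ) < ENNReal.ofReal (|f x|^δ)} := by
    intro k x hx
    obtain ⟨-, h1, -⟩ := hx
    have hfpos : (0:ℝ) < |f x| := lt_trans (Real.rpow_pos_of_pos h2 _) h1
    have := Real.rpow_lt_rpow (le_of_lt (Real.rpow_pos_of_pos h2 _)) h1 hδ0
    exact (ENNReal.ofReal_lt_ofReal_iff (Real.rpow_pos_of_pos hfpos δ)).mpr this
  have hsub2 : ∀ k, Ek k ⊆
      {x | ENNReal.ofReal ((2:ℝ)^((k:ℝ)) * y) < ennAbs g x} := by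
    intro k x hx
    obtain ⟨h0, h1, h2'⟩ := hx
    have hygt : y < |f x * g x| := by
      by_contra hcon
      push_neg at hcon
      exact absurd (lt_of_lt_of_le h0 (ENNReal.ofReal_le_ofReal hcon)) (lt_irrefl _)
    rw [abs_mul] at hygt
    have hgpos : 0 < |g x| := by
      rcases le_or_gt |g x| 0 with hg | hg
      · exfalso
        have : |f x| * |g x| ≤ 0 := mul_nonpos_of_nonneg_of_nonpos (abs_nonneg _) hg
        linarith
      · exact hg
    have hkey : (2:ℝ)^((k:ℝ)) * y < |g x| := by
      have hfle : |f x| * |g x| ≤ (2:ℝ)^(-(k:ℝ)) * |g x| :=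
        mul_le_mul_of_nonneg_right h2' (abs_nonneg _)
      have hlt : (2:ℝ)^((k:ℝ)) * y < (2:ℝ)^((k:ℝ)) * ((2:ℝ)^(-(k:ℝ)) * |g x|) := by
        apply mul_lt_mul_of_pos_left _ (Real.rpow_pos_of_pos h2 _)
        linarith
      calc (2:ℝ)^((k:ℝ)) * y < (2:ℝ)^((k:ℝ)) * ((2:ℝ)^(-(k:ℝ)) * |g x|) := hlt
        _ = |g x| := by
            rw [← mul_assoc, ← Real.rpow_add h2]
            simp
    have : ENNReal.ofReal ((2:ℝ)^((k:ℝ)) * y) < ENNReal.ofReal |g x| :=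
      (ENNReal.ofReal_lt_ofReal_iff hgpos).mpr hkey
    exact this
  -- per-k weight bounds
  have hwk1 : ∀ k, wSet w₁ (Ek k) ≤
      (A / ENNReal.ofReal (((2:ℝ)^(-((k:ℝ)+1)))^δ))^p₁ :=
    fun k => (wSet_mono w₁ (hsub1 k)).trans (distrib_le hp₁ w₁ _ (hu k) hA)
  have hwk2 : ∀ k, wSet w₂ (Ek k) ≤
      (B / ENNReal.ofReal ((2:ℝ)^((k:ℝ)) * y))^p₂ :=
    fun k => (wSet_mono w₂ (hsub2 k)).trans (distrib_le hp₂ w₂ _ (hv k) hB)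
  -- conjugate exponents
  have hpp1 : p < p₁ := by
    have h2' : 0 < p/p₂ := by positivity
    have h1 : p/p₁ < 1 := by linarith
    rwa [div_lt_one hp₁] at h1
  have hconj : Real.HolderConjugate (p₁/p) (p₂/p) := by
    refine Real.holderConjugate_iff.mpr ⟨?_, ?_⟩
    · rw [lt_div_iff₀ hp, one_mul]; exact hpp1
    · rw [inv_div, inv_div]; exact hsum
  -- Hölder
  have hHold : ∀ k, wSet w (Ek k) ≤ (wSet w₁ (Ek k))^(p/p₁) * (wSet w₂ (Ek k))^(p/p₂) := by
    intro k
    have hmw1 : AEMeasurable (fun x => (ENNReal.ofReal (w₁ x))^(p/p₁))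
        ((volume : Measure (Rn n)).restrict (Ek k)) :=
      ((ENNReal.measurable_ofReal.comp_aemeasurable
        hw₁.2.aestronglyMeasurable.aemeasurable).pow_const _).restrict
    have hmw2 : AEMeasurable (fun x => (ENNReal.ofReal (w₂ x))^(p/p₂))
        ((volume : Measure (Rn n)).restrict (Ek k)) :=
      ((ENNReal.measurable_ofReal.comp_aemeasurable
        hw₂.2.aestronglyMeasurable.aemeasurable).pow_const _).restrict
    have hcong : ∀ x : Rn n, ENNReal.ofReal (w x) =
        (ENNReal.ofReal (w₁ x))^(p/p₁) * (ENNReal.ofReal (w₂ x))^(p/p₂) := by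
      intro x
      rw [hw]
      rw [ENNReal.ofReal_mul (Real.rpow_nonneg (le_of_lt (hw₁.1 x)) _)]
      rw [← ENNReal.ofReal_rpow_of_pos (hw₁.1 x), ← ENNReal.ofReal_rpow_of_pos (hw₂.1 x)]
    have e1 : p/p₁ * (p₁/p) = 1 := by field_simp
    have e2 : p/p₂ * (p₂/p) = 1 := by field_simp
    calc wSet w (Ek k) = ∫⁻ x in Ek k,
          (ENNReal.ofReal (w₁ x))^(p/p₁) * (ENNReal.ofReal (w₂ x))^(p/p₂) := by
          unfold wSet; exact lintegral_congr (fun x => hcong x)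
      _ ≤ (∫⁻ x in Ek k, ((ENNReal.ofReal (w₁ x))^(p/p₁))^(p₁/p))^(1/(p₁/p)) *
          (∫⁻ x in Ek k, ((ENNReal.ofReal (w₂ x))^(p/p₂))^(p₂/p))^(1/(p₂/p)) :=
          ENNReal.lintegral_mul_le_Lp_mul_Lq _ hconj hmw1 hmw2
      _ = (wSet w₁ (Ek k))^(p/p₁) * (wSet w₂ (Ek k))^(p/p₂) := by
          rw [one_div, inv_div, one_div, inv_div]
          congr 2
          · apply lintegral_congr; intro x
            rw [← ENNReal.rpow_mul, e1, ENNReal.rpow_one]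
          · apply lintegral_congr; intro x
            rw [← ENNReal.rpow_mul, e2, ENNReal.rpow_one]
  -- per-k total bound
  have hTk : ∀ k, wSet w (Ek k) ≤ (A^p * B^p) *
      (ENNReal.ofReal ((2:ℝ)^(δ*p) * y^(-p)) * (ENNReal.ofReal ((2:ℝ)^(-(p*(1-δ)))))^k) := by
    intro k
    have step1 : wSet w (Ek k) ≤
        (A / ENNReal.ofReal (((2:ℝ)^(-((k:ℝ)+1)))^δ))^p *
        (B / ENNReal.ofReal ((2:ℝ)^((k:ℝ)) * y))^p := by
      refine (hHold k).trans ?_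
      have c1 : ((A / ENNReal.ofReal (((2:ℝ)^(-((k:ℝ)+1)))^δ))^p₁)^(p/p₁)
          = (A / ENNReal.ofReal (((2:ℝ)^(-((k:ℝ)+1)))^δ))^p := by
        rw [← ENNReal.rpow_mul]
        congr 1
        field_simp
      have c2 : ((B / ENNReal.ofReal ((2:ℝ)^((k:ℝ)) * y))^p₂)^(p/p₂)
          = (B / ENNReal.ofReal ((2:ℝ)^((k:ℝ)) * y))^p := by
        rw [← ENNReal.rpow_mul]
        congr 1
        field_simp
      rw [← c1, ← c2]
      exact mul_le_mul' (ENNReal.rpow_le_rpow (hwk1 k) (by positivity))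
        (ENNReal.rpow_le_rpow (hwk2 k) (by positivity))
    refine step1.trans (le_of_eq ?_)
    rw [div_eq_mul_inv, div_eq_mul_inv,
      ← ENNReal.ofReal_inv_of_pos (hu k), ← ENNReal.ofReal_inv_of_pos (hv k),
      ENNReal.mul_rpow_of_nonneg _ _ (le_of_lt hp),
      ENNReal.mul_rpow_of_nonneg _ _ (le_of_lt hp),
      ENNReal.ofReal_rpow_of_pos (inv_pos.mpr (hu k)),
      ENNReal.ofReal_rpow_of_pos (inv_pos.mpr (hv k))]
    rw [show ∀ a b c d : ℝ≥0∞, a * b * (c * d) = (a * c) * (b * d) from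
      fun a b c d => by ring]
    congr 1
    rw [← ENNReal.ofReal_pow (by positivity), ← ENNReal.ofReal_mul (by positivity),
      ← ENNReal.ofReal_mul (by positivity)]
    congr 1
    exact term_eq p δ y hδ0 hy k
  -- sum up
  set r : ℝ := (2:ℝ)^(-(p*(1-δ))) with hrdef
  have hr0 : 0 < r := Real.rpow_pos_of_pos h2 _
  have hr1 : r < 1 := by
    apply Real.rpow_lt_one_of_one_lt_of_neg (by norm_num)
    have : 0 < p * (1-δ) := _root_.mul_pos hp (by linarith)
    linarith
  have h1r : 0 < 1 - r := by linarith
  have hgeo : ∑' k : ℕ, (ENNReal.ofReal r)^k = ENNReal.ofReal ((1-r)⁻¹) := by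
    rw [ENNReal.tsum_geometric, ← ENNReal.ofReal_one, ← ENNReal.ofReal_sub 1 hr0.le,
      ENNReal.ofReal_inv_of_pos h1r]
  have hwE : wSet w E ≤ (A^p * B^p) *
      ENNReal.ofReal (((2:ℝ)^(δ*p) * y^(-p)) * (1-r)⁻¹) := by
    calc wSet w E ≤ wSet w ((⋃ k, Ek k) ∪ N) := wSet_mono w hcov
      _ ≤ wSet w (⋃ k, Ek k) + wSet w N := lintegral_union_le _ _ _
      _ = wSet w (⋃ k, Ek k) := by rw [wSet_null w hNnull, add_zero]
      _ ≤ ∑' k, wSet w (Ek k) := lintegral_iUnion_le _ _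
      _ ≤ ∑' k, (A^p * B^p) *
          (ENNReal.ofReal ((2:ℝ)^(δ*p) * y^(-p)) * (ENNReal.ofReal r)^k) :=
          ENNReal.tsum_le_tsum hTk
      _ = (A^p * B^p) * (ENNReal.ofReal ((2:ℝ)^(δ*p) * y^(-p)) *
          ∑' k : ℕ, (ENNReal.ofReal r)^k) := by
          rw [ENNReal.tsum_mul_left, ENNReal.tsum_mul_left]
      _ = (A^p * B^p) * ENNReal.ofReal (((2:ℝ)^(δ*p) * y^(-p)) * (1-r)⁻¹) := by
          rw [hgeo, ← ENNReal.ofReal_mul (by positivity)]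
  -- take p-th roots
  have hpne : p ≠ 0 := ne_of_gt hp
  have hroot : (wSet w E)^(1/p) ≤ A * B *
      ENNReal.ofReal ((((2:ℝ)^(δ*p) * y^(-p)) * (1-r)⁻¹)^(1/p)) := by
    calc (wSet w E)^(1/p) ≤ ((A^p * B^p) *
        ENNReal.ofReal (((2:ℝ)^(δ*p) * y^(-p)) * (1-r)⁻¹))^(1/p) :=
        ENNReal.rpow_le_rpow hwE (by positivity)
      _ = A * B * ENNReal.ofReal ((((2:ℝ)^(δ*p) * y^(-p)) * (1-r)⁻¹)^(1/p)) := by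
          rw [ENNReal.mul_rpow_of_nonneg _ _ (by positivity : (0:ℝ) ≤ 1/p),
            ENNReal.mul_rpow_of_nonneg _ _ (by positivity : (0:ℝ) ≤ 1/p),
            ← ENNReal.rpow_mul, ← ENNReal.rpow_mul, mul_one_div_cancel hpne,
            ENNReal.rpow_one, ENNReal.rpow_one,
            ENNReal.ofReal_rpow_of_pos (by positivity)]
  have hreal : y * (((2:ℝ)^(δ*p) * y^(-p)) * (1-r)⁻¹)^(1/p)
      = ((2:ℝ)^(δ*p) / (1-r))^(1/p) := by
    have e1 : ((2:ℝ)^(δ*p) * y^(-p)) * (1-r)⁻¹ = ((2:ℝ)^(δ*p) * (1-r)⁻¹) * y^(-p) := by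
      ring
    rw [e1, Real.mul_rpow (by positivity) (by positivity)]
    have e2 : (y^(-p))^(1/p) = y⁻¹ := by
      rw [← Real.rpow_mul hy.le]
      rw [show -p * (1/p) = -1 by field_simp]
      exact Real.rpow_neg_one y
    rw [e2, div_eq_mul_inv]
    field_simp
  calc ENNReal.ofReal y * (distrib w (ennAbs fun x => f x * g x) y)^(1/p)
      ≤ ENNReal.ofReal y * (A * B *
        ENNReal.ofReal ((((2:ℝ)^(δ*p) * y^(-p)) * (1-r)⁻¹)^(1/p))) :=
        mul_le_mul_right hroot _
    _ = ENNReal.ofReal (y * (((2:ℝ)^(δ*p) * y^(-p)) * (1-r)⁻¹)^(1/p)) * (A * B) := by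
        rw [ENNReal.ofReal_mul hy.le]; ring
    _ = ENNReal.ofReal (((2:ℝ)^(δ*p) / (1 - (2:ℝ)^(-(p*(1-δ)))))^(1/p)) * (A * B) := by
        rw [hreal]



end EstD

/-- weak Hölder inequality with change of measures, with a δ-power loss. -/
theorem stmt_5 (p p₁ p₂ : ℝ) (hp₁ : 0 < p₁) (hp₂ : 0 < p₂)
    (hp : 1 / p = 1 / p₁ + 1 / p₂) (δ : ℝ) (hδ₀ : 0 < δ) (hδ₁ : δ < 1) :
    ∃ C : ℝ, 0 < C ∧
      C = sInf {c : ℝ | ∃ q : ℝ, 0 < q ∧ q < p ∧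
        c = 2 * (p / (Real.log 2 * (1 - δ) * q * (p - q))) ^ (1 / q)} ∧
      ∀ (n : ℕ) (w₁ w₂ : Rn n → ℝ), IsWeight w₁ → IsWeight w₂ →
        ∀ f g : Rn n → ℝ, Measurable f → Measurable g →
          (∀ᵐ x ∂(volume : Measure (Rn n)), |f x| ≤ 1) →
          wLpInfty p (fun x => w₁ x ^ (p / p₁) * w₂ x ^ (p / p₂))
              (ennAbs fun x => f x * g x) ≤
            ENNReal.ofReal C * wLpInfty p₁ w₁ (fun x => ENNReal.ofReal (|f x| ^ δ)) *
              wLpInfty p₂ w₂ (ennAbs g) := by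
  classical
  have hp0 : 0 < p := by
    have h1 : 0 < 1/p₁ + 1/p₂ := by positivity
    rw [← hp] at h1
    exact one_div_pos.mp h1
  have hpne : p ≠ 0 := ne_of_gt hp0
  have hsum : p/p₁ + p/p₂ = 1 := by
    have : p/p₁ + p/p₂ = p * (1/p₁ + 1/p₂) := by ring
    rw [this, ← hp, mul_one_div, div_self hpne]
  set D : ℝ := (2:ℝ)^(δ*p) / (1 - (2:ℝ)^(-(p*(1-δ)))) with hDdef
  have hr0 : (0:ℝ) < (2:ℝ)^(-(p*(1-δ))) := Real.rpow_pos_of_pos two_pos _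
  have hr1 : (2:ℝ)^(-(p*(1-δ))) < 1 := by
    apply Real.rpow_lt_one_of_one_lt_of_neg (by norm_num)
    have : 0 < p * (1-δ) := _root_.mul_pos hp0 (by linarith)
    linarith
  have hD1 : 1 ≤ D := by
    rw [hDdef, le_div_iff₀ (by linarith)]
    have : (1:ℝ) ≤ (2:ℝ)^(δ*p) := Real.one_le_rpow (by norm_num) (by positivity)
    linarith
  have hD0 : 0 < D := lt_of_lt_of_le one_pos hD1
  set S : Set ℝ := {c : ℝ | ∃ q : ℝ, 0 < q ∧ q < p ∧
    c = 2 * (p / (Real.log 2 * (1 - δ) * q * (p - q))) ^ (1 / q)} with hSdef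
  have hcqpos : ∀ q : ℝ, 0 < q → q < p →
      0 < 2 * (p / (Real.log 2 * (1 - δ) * q * (p - q))) ^ (1 / q) := by
    intro q hq0 hqp
    have hbase : 0 < p / (Real.log 2 * (1 - δ) * q * (p - q)) := by
      apply div_pos hp0
      have := Real.log_pos (by norm_num : (1:ℝ) < 2)
      have h1δ : (0:ℝ) < 1 - δ := by linarith
      have hpq : (0:ℝ) < p - q := by linarith
      positivity
    positivity
  have hDcq : ∀ c ∈ S, D ≤ c ^ p := by
    rintro c ⟨q, hq0, hqp, rfl⟩
    exact const_ineq p δ q hp0 hδ₀ hδ₁ hq0 hqp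
  have hmem1 : ∀ c ∈ S, 1 ≤ c := by
    intro c hc
    obtain ⟨q, hq0, hqp, hceq⟩ := hc
    have hc0 : 0 < c := hceq ▸ hcqpos q hq0 hqp
    have h1 : (1:ℝ) ≤ c ^ p := le_trans hD1 (hDcq c ⟨q, hq0, hqp, hceq⟩)
    by_contra hcon
    push_neg at hcon
    have : c ^ p < 1 ^ p := Real.rpow_lt_rpow (le_of_lt hc0) hcon hp0
    rw [Real.one_rpow] at this
    linarith
  have hSne : S.Nonempty := by
    refine ⟨2 * (p / (Real.log 2 * (1 - δ) * (p/2) * (p - p/2))) ^ (1 / (p/2)),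
      p/2, by positivity, by linarith, rfl⟩
  have hbdd : BddBelow S := ⟨1, fun c hc => hmem1 c hc⟩
  have hC1 : 1 ≤ sInf S := le_csInf hSne hmem1
  refine ⟨sInf S, by linarith, rfl, ?_⟩
  intro n w₁ w₂ hw₁ hw₂ f g hf hg hf1
  set A := wLpInfty p₁ w₁ (fun x => ENNReal.ofReal (|f x| ^ δ)) with hAdef
  set B := wLpInfty p₂ w₂ (ennAbs g) with hBdef
  -- lemma: LHS = 0 if f*g = 0 a.e.
  have hLHS0 : (∀ᵐ x ∂(volume : Measure (Rn n)), f x * g x = 0) →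
      wLpInfty p (fun x => w₁ x ^ (p / p₁) * w₂ x ^ (p / p₂))
        (ennAbs fun x => f x * g x) = 0 := by
    intro h0
    apply le_antisymm _ (zero_le)
    apply iSup₂_le
    intro y hy
    have hnull : volume {x : Rn n | ¬ f x * g x = 0} = 0 := ae_iff.mp h0
    have hsub : {x : Rn n | ENNReal.ofReal y < ennAbs (fun x => f x * g x) x} ⊆
        {x : Rn n | ¬ f x * g x = 0} := by
      intro x hx
      simp only [mem_setOf_eq] at hx ⊢
      intro hzero
      rw [show ennAbs (fun x => f x * g x) x = ENNReal.ofReal |f x * g x| from rfl,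
        hzero] at hx
      simp at hx
    have hd0 : distrib (fun x => w₁ x ^ (p / p₁) * w₂ x ^ (p / p₂))
        (ennAbs fun x => f x * g x) y = 0 :=
      le_antisymm ((wSet_mono _ hsub).trans (le_of_eq (wSet_null _ hnull))) (zero_le)
    rw [hd0, ENNReal.zero_rpow_of_pos (by positivity), mul_zero]
  by_cases hA0 : A = 0
  · have hae : ∀ᵐ x ∂(volume : Measure (Rn n)), ENNReal.ofReal (|f x| ^ δ) = 0 :=
      ae_zero_of_wLpInfty_zero hp₁ hw₁ hA0
    have hfg0 : ∀ᵐ x ∂(volume : Measure (Rn n)), f x * g x = 0 := by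
      refine hae.mono fun x hx => ?_
      rw [ENNReal.ofReal_eq_zero] at hx
      have hfx : f x = 0 := by
        by_contra hne
        have : 0 < |f x| ^ δ := Real.rpow_pos_of_pos (abs_pos.mpr hne) δ
        linarith
      rw [hfx, zero_mul]
    rw [hLHS0 hfg0]
    exact zero_le
  · by_cases hB0 : B = 0
    · have hae : ∀ᵐ x ∂(volume : Measure (Rn n)), ennAbs g x = 0 :=
        ae_zero_of_wLpInfty_zero hp₂ hw₂ hB0
      have hfg0 : ∀ᵐ x ∂(volume : Measure (Rn n)), f x * g x = 0 := by
        refine hae.mono fun x hx => ?_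
        rw [show ennAbs g x = ENNReal.ofReal |g x| from rfl,
          ENNReal.ofReal_eq_zero] at hx
        have hgx : g x = 0 := abs_nonpos_iff.mp hx
        rw [hgx, mul_zero]
      rw [hLHS0 hfg0]
      exact zero_le
    · by_cases hAtop : A = ⊤
      · have hC0 : (0:ℝ) < sInf S := by linarith
        have : ENNReal.ofReal (sInf S) * A * B = ⊤ := by
          rw [hAtop, ENNReal.mul_top (by simp [ENNReal.ofReal_eq_zero]; linarith)]
          exact ENNReal.top_mul hB0
        rw [this]
        exact le_top
      · by_cases hBtop : B = ⊤
        · have : ENNReal.ofReal (sInf S) * A * B = ⊤ := by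
            rw [hBtop]
            apply ENNReal.mul_top
            apply mul_ne_zero _ hA0
            simp only [ne_eq, ENNReal.ofReal_eq_zero, not_le]
            linarith
          rw [this]
          exact le_top
        · -- main case
          apply iSup₂_le
          intro y hy
          rw [mul_assoc]
          apply ENNReal.le_of_forall_pos_le_add
          intro ε hε htop
          set M := A * B with hMdef
          have hMtop : M ≠ ⊤ := ENNReal.mul_ne_top hAtop hBtop
          have hM0 : M ≠ 0 := mul_ne_zero hA0 hB0
          have hMr : (0:ℝ) ≤ M.toReal := ENNReal.toReal_nonneg
          set η : ℝ := (ε : ℝ) / (M.toReal + 1) with hηdef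
          have hη0 : 0 < η := by
            apply div_pos _ (by linarith)
            exact_mod_cast hε
          obtain ⟨c, hcS, hclt⟩ := Real.lt_sInf_add_pos hSne hη0
          obtain ⟨q, hq0, hqp, hceq⟩ := hcS
          -- apply est_D
          have hest := est_D p p₁ p₂ δ hp0 hp₁ hp₂ hsum hδ₀ hδ₁ w₁ w₂ hw₁ hw₂ f g hf1
            A B le_rfl le_rfl hy
          have hDc : D ^ (1/p) ≤ c := by
            have h1 : D ^ (1/p) ≤ (c ^ p) ^ (1/p) :=
              Real.rpow_le_rpow hD0.le (hDcq c ⟨q, hq0, hqp, hceq⟩) (by positivity)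
            rwa [← Real.rpow_mul (le_of_lt (hceq ▸ hcqpos q hq0 hqp)), mul_one_div_cancel hpne,
              Real.rpow_one] at h1
          have step1 : ENNReal.ofReal y * (distrib (fun x => w₁ x ^ (p / p₁) * w₂ x ^ (p / p₂))
              (ennAbs fun x => f x * g x) y) ^ (1/p) ≤ ENNReal.ofReal c * M := by
            refine hest.trans ?_
            exact mul_le_mul_left (ENNReal.ofReal_le_ofReal hDc) M
          refine step1.trans ?_
          have hsplit : ENNReal.ofReal c ≤ ENNReal.ofReal (sInf S) + ENNReal.ofReal η := by
            rw [← ENNReal.ofReal_add (by linarith) hη0.le]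
            exact ENNReal.ofReal_le_ofReal hclt.le
          calc ENNReal.ofReal c * M ≤ (ENNReal.ofReal (sInf S) + ENNReal.ofReal η) * M :=
              mul_le_mul_left hsplit M
            _ = ENNReal.ofReal (sInf S) * M + ENNReal.ofReal η * M := by rw [add_mul]
            _ ≤ ENNReal.ofReal (sInf S) * M + ε := by
                apply add_le_add_right
                have hMeq : M = ENNReal.ofReal M.toReal := (ENNReal.ofReal_toReal hMtop).symm
                rw [hMeq, ← ENNReal.ofReal_mul hη0.le]
                have : η * M.toReal ≤ (ε:ℝ) := by
                  rw [hηdef, div_mul_eq_mul_div, div_le_iff₀ (by linarith)]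
                  have hε0 : (0:ℝ) ≤ (ε:ℝ) := NNReal.coe_nonneg ε
                  nlinarith
                refine le_trans (ENNReal.ofReal_le_ofReal this) ?_
                rw [ENNReal.ofReal_coe_nnreal]
end

section
/- Let 0 < p1, p2 < ∞, 1/p = 1/p1 + 1/p2, let w1, w2 be weights on ℝⁿ with w1, w2 ∈ A_∞, and set w := w1^{p/p1}·w2^{p/p2}. Then there exist constants c, C > 0 such that for every cube Q ⊆ ℝⁿ, c·w(Q)^{1/p} ≤ w1(Q)^{1/p1}·w2(Q)^{1/p2} ≤ C·w(Q)^{1/p}. -/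
open MeasureTheory ENNReal Set

namespace S6

theorem cube_eq_preimage {n : ℕ} (c : Rn n) (r : ℝ) :
    ({x : Rn n | ∀ i, |x i - c i| ≤ r}) =
      (MeasurableEquiv.toLp 2 (Fin n → ℝ)).symm ⁻¹' (Set.univ.pi fun i => Icc (c i - r) (c i + r)) := by
  have he : ∀ (x : Rn n) (i : Fin n), (MeasurableEquiv.toLp 2 (Fin n → ℝ)).symm x i = x i :=
    fun _ _ => rfl
  ext x
  constructor
  · intro h i _
    have := abs_sub_le_iff.mp (h i)
    rw [he]
    exact ⟨by linarith [this.2], by linarith [this.1]⟩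
  · intro h i
    have := h i trivial
    rw [he, Set.mem_Icc] at this
    rw [abs_sub_le_iff]
    exact ⟨by linarith [this.2], by linarith [this.1]⟩

theorem cube_facts {n : ℕ} {Q : Set (Rn n)} (hQ : IsCube Q) :
    MeasurableSet Q ∧ IsCompact Q ∧ 0 < volume Q ∧ volume Q ≠ ⊤ := by
  obtain ⟨c, r, hr, rfl⟩ := hQ
  have hv : volume ({x : Rn n | ∀ i, |x i - c i| ≤ r}) = (ENNReal.ofReal (2*r))^n := by
    rw [cube_eq_preimage,
      (EuclideanSpace.volume_preserving_symm_measurableEquiv_toLp (Fin n)).measure_preimage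
        (MeasurableSet.univ_pi fun i => measurableSet_Icc).nullMeasurableSet,
      volume_pi_pi]
    have : ∀ i : Fin n, c i + r - (c i - r) = 2*r := by intro i; ring
    simp [Real.volume_Icc, this]
  refine ⟨?_, ?_, ?_, ?_⟩
  · rw [cube_eq_preimage]
    exact (MeasurableEquiv.toLp 2 (Fin n → ℝ)).symm.measurable
      (MeasurableSet.univ_pi fun i => measurableSet_Icc)
  · have : ({x : Rn n | ∀ i, |x i - c i| ≤ r} : Set (Rn n))
        = (EuclideanSpace.equiv (Fin n) ℝ).toHomeomorph.symm ''
          (Set.univ.pi fun i => Icc (c i - r) (c i + r)) := by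
      rw [Homeomorph.image_symm]
      exact cube_eq_preimage c r
    rw [this]
    exact (isCompact_univ_pi fun i => isCompact_Icc).image (Homeomorph.continuous _)
  · rw [hv]
    exact ENNReal.pow_pos (ENNReal.ofReal_pos.mpr (by linarith)) n
  · rw [hv]
    exact ENNReal.pow_ne_top ENNReal.ofReal_ne_top

theorem wSet_eq {n : ℕ} {v : Rn n → ℝ} (hpos : ∀ x, 0 < v x) {Q : Set (Rn n)}
    (hQ : IsCube Q) (hint : IntegrableOn v Q volume) :
    wSet v Q = ENNReal.ofReal (∫ x in Q, v x) ∧ 0 < ∫ x in Q, v x := by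
  obtain ⟨hmeas, hcomp, hpos', hfin⟩ := cube_facts hQ
  have hnn : 0 ≤ᵐ[volume.restrict Q] v :=
    Filter.Eventually.of_forall fun x => (hpos x).le
  constructor
  · rw [wSet, ← ofReal_integral_eq_lintegral_ofReal hint hnn]
  · rw [setIntegral_pos_iff_support_of_nonneg_ae hnn hint]
    have : Function.support v ∩ Q = Q :=
      Set.inter_eq_self_of_subset_right fun x _ => (hpos x).ne'
    rwa [this]

theorem weight_integrableOn {n : ℕ} {v : Rn n → ℝ} (hv : IsWeight v) {Q : Set (Rn n)}
    (hQ : IsCube Q) : IntegrableOn v Q volume :=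
  hv.2.integrableOn_isCompact (cube_facts hQ).2.1

theorem exp_avg_le {α : Type*} [MeasurableSpace α] (μ : Measure α) [IsFiniteMeasure μ] [NeZero μ]
    {f : α → ℝ} (hfi : Integrable f μ) (hgi : Integrable (fun x => Real.exp (f x)) μ) :
    Real.exp ((μ Set.univ).toReal⁻¹ * ∫ x, f x ∂μ) ≤
      (μ Set.univ).toReal⁻¹ * ∫ x, Real.exp (f x) ∂μ := by
  have h := convexOn_exp.map_average_le Real.continuous_exp.continuousOn isClosed_univ
    (Filter.Eventually.of_forall fun _ => Set.mem_univ _) hfi hgi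
  rwa [average_eq, average_eq, smul_eq_mul, smul_eq_mul] at h

/-- Jensen on a cube. -/
theorem exp_cube_avg_le {n : ℕ} {Q : Set (Rn n)} (hQ : IsCube Q) {f : Rn n → ℝ}
    (hfi : IntegrableOn f Q volume)
    (hgi : IntegrableOn (fun x => Real.exp (f x)) Q volume) :
    Real.exp ((volume Q).toReal⁻¹ * ∫ x in Q, f x) ≤
      (volume Q).toReal⁻¹ * ∫ x in Q, Real.exp (f x) := by
  obtain ⟨hmeas, hcomp, hpos', hfin⟩ := cube_facts hQ
  haveI : IsFiniteMeasure (volume.restrict Q) :=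
    ⟨by rwa [Measure.restrict_apply_univ, lt_top_iff_ne_top]⟩
  haveI : NeZero (volume.restrict Q) := by
    refine ⟨fun h => ?_⟩
    have := Measure.restrict_apply_univ (μ := (volume : Measure (Rn n))) Q
    rw [h] at this
    simp only [Measure.coe_zero, Pi.zero_apply] at this
    exact hpos'.ne' this.symm
  have h := exp_avg_le (volume.restrict Q) hfi hgi
  rwa [Measure.restrict_apply_univ] at h

theorem le_maximal {n : ℕ} {v : Rn n → ℝ} (hpos : ∀ x, 0 < v x) {Q : Set (Rn n)}
    (hQ : IsCube Q) {x : Rn n} (hx : x ∈ Q) :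
    (volume Q)⁻¹ * wSet v Q ≤ maximal v x := by
  have : wSet v Q = ∫⁻ y in Q, ENNReal.ofReal |v y| :=
    lintegral_congr fun y => by rw [abs_of_pos (hpos y)]
  rw [this]
  exact le_iSup_of_le Q (le_iSup_of_le hQ (le_iSup_of_le hx le_rfl))

end S6

namespace S6

theorem wSet_pos_fin {n : ℕ} {v : Rn n → ℝ} (hv : IsWeight v) {Q : Set (Rn n)}
    (hQ : IsCube Q) : 0 < wSet v Q ∧ wSet v Q ≠ ⊤ := by
  obtain ⟨hweq, hwpos⟩ := wSet_eq hv.1 hQ (weight_integrableOn hv hQ)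
  rw [hweq]
  exact ⟨ENNReal.ofReal_pos.mpr hwpos, ENNReal.ofReal_ne_top⟩

theorem ainfty_bound {n : ℕ} {v : Rn n → ℝ} (hv : IsWeight v) (hA : MemAinfty v) :
    ∃ C : ℝ, 0 < C ∧ ∀ Q : Set (Rn n), IsCube Q →
      IntegrableOn (fun x => Real.log (v x)) Q volume ∧
      (∫ x in Q, v x) ≤ C * (volume Q).toReal *
        Real.exp ((volume Q).toReal⁻¹ * ∫ x in Q, Real.log (v x)) := by
  have hpos := hv.1
  have hvm : AEMeasurable v (volume : Measure (Rn n)) :=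
    hv.2.aestronglyMeasurable.aemeasurable
  obtain ⟨p₀, hp₀, hAp⟩ := hA
  rcases hAp with ⟨hp1, hA1⟩ | ⟨hp1, hApc⟩
  · -- A₁ case
    obtain ⟨C, hC⟩ := hA1
    -- C is positive
    have hCpos : 0 < C := by
      by_contra hC0
      push_neg at hC0
      set Q₀ : Set (Rn n) := {x : Rn n | ∀ i, |x i - (0 : Rn n) i| ≤ 1} with hQ₀def
      have hQ₀ : IsCube Q₀ := ⟨0, 1, one_pos, rfl⟩
      obtain ⟨hm₀, hc₀, hv₀, hf₀⟩ := cube_facts hQ₀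
      obtain ⟨hwpos₀, hwfin₀⟩ := wSet_pos_fin hv hQ₀
      have haQ : 0 < (volume Q₀)⁻¹ * wSet v Q₀ :=
        ENNReal.mul_pos (by simpa [ENNReal.inv_ne_zero] using hf₀) hwpos₀.ne'
      have hnot : ∀ᵐ x ∂(volume : Measure (Rn n)), x ∉ Q₀ := by
        filter_upwards [hC] with x hx hxQ
        have h1 : (volume Q₀)⁻¹ * wSet v Q₀ ≤ ENNReal.ofReal (C * v x) :=
          le_trans (le_maximal hpos hQ₀ hxQ) hx
        have h2 : ENNReal.ofReal (C * v x) = 0 := by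
          rw [ENNReal.ofReal_eq_zero]
          exact mul_nonpos_of_nonpos_of_nonneg hC0 (hpos x).le
        rw [h2] at h1
        exact haQ.ne' (le_antisymm h1 zero_le)
      rw [← measure_eq_zero_iff_ae_notMem] at hnot
      exact hv₀.ne' hnot
    refine ⟨C, hCpos, fun Q hQ => ?_⟩
    obtain ⟨hmeas, hcomp, hVpos, hVfin⟩ := cube_facts hQ
    have hvint : IntegrableOn v Q volume := weight_integrableOn hv hQ
    obtain ⟨hweq, hIpos⟩ := wSet_eq hpos hQ hvint
    set Vr : ℝ := (volume Q).toReal with hVr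
    have hVrpos : 0 < Vr := ENNReal.toReal_pos hVpos.ne' hVfin
    set I : ℝ := ∫ x in Q, v x with hI
    set ar : ℝ := Vr⁻¹ * I with har
    have harpos : 0 < ar := by positivity
    -- pointwise a.e. bound on Q : ar ≤ C * v x
    have hae : ∀ᵐ x ∂(volume.restrict Q), ar ≤ C * v x := by
      filter_upwards [ae_restrict_of_ae hC, ae_restrict_mem hmeas] with x hx hxQ
      have h1 : (volume Q)⁻¹ * wSet v Q ≤ ENNReal.ofReal (C * v x) :=
        le_trans (le_maximal hpos hQ hxQ) hx
      have h2 : ((volume Q)⁻¹ * wSet v Q).toReal = ar := by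
        rw [ENNReal.toReal_mul, ENNReal.toReal_inv, hweq,
          ENNReal.toReal_ofReal hIpos.le]
      have h3 := ENNReal.toReal_mono ENNReal.ofReal_ne_top h1
      rwa [h2, ENNReal.toReal_ofReal (mul_pos hCpos (hpos x)).le] at h3
    set L₀ : ℝ := Real.log (ar / C) with hL₀
    have haeC : ∀ᵐ x ∂(volume.restrict Q), L₀ ≤ Real.log (v x) := by
      filter_upwards [hae] with x hx
      apply Real.log_le_log (by positivity)
      rw [div_le_iff₀ hCpos]
      linarith [hx, mul_comm C (v x)]
    -- integrability of log v on Q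
    have hlogm : AEStronglyMeasurable (fun x => Real.log (v x)) (volume.restrict Q) :=
      (Real.measurable_log.comp_aemeasurable hvm.restrict).aestronglyMeasurable
    have hlogint : IntegrableOn (fun x => Real.log (v x)) Q volume := by
      apply Integrable.mono' (g := fun x => v x + |L₀|)
        (hvint.add (integrableOn_const hVfin)) hlogm
      filter_upwards [haeC] with x hx
      rw [Real.norm_eq_abs, abs_le]
      have h1 : Real.log (v x) ≤ v x := (Real.log_le_sub_one_of_pos (hpos x)).trans (by linarith)
      constructor
      · have := neg_abs_le L₀
        linarith [(hpos x).le]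
      · linarith [abs_nonneg L₀]
    refine ⟨hlogint, ?_⟩
    -- average of log bounded below
    have hLV : L₀ * Vr ≤ ∫ x in Q, Real.log (v x) := by
      have := integral_mono_ae (show Integrable (fun _ => L₀) (volume.restrict Q) from integrableOn_const (C := L₀) hVfin) hlogint haeC
      rwa [setIntegral_const, smul_eq_mul, mul_comm] at this
    have hM : L₀ ≤ Vr⁻¹ * ∫ x in Q, Real.log (v x) := by
      rw [← mul_le_mul_iff_right₀ hVrpos, ← mul_assoc, mul_inv_cancel₀ hVrpos.ne', one_mul, mul_comm]
      exact hLV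
    have hexp : ar / C ≤ Real.exp (Vr⁻¹ * ∫ x in Q, Real.log (v x)) := by
      calc ar / C = Real.exp L₀ := (Real.exp_log (by positivity)).symm
        _ ≤ _ := Real.exp_le_exp.mpr hM
    calc I = Vr * ar := by rw [har]; field_simp
      _ ≤ Vr * (C * Real.exp (Vr⁻¹ * ∫ x in Q, Real.log (v x))) := by
          apply mul_le_mul_of_nonneg_left _ hVrpos.le
          rw [← div_le_iff₀' hCpos] at *
          exact hexp
      _ = C * Vr * Real.exp (Vr⁻¹ * ∫ x in Q, Real.log (v x)) := by ring
  · -- A_p case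
    have hp1' : (0:ℝ) < p₀ - 1 := by linarith
    set K : ℝ := (ApConst p₀ v).toReal with hKdef
    have hK0 : 0 ≤ K := ENNReal.toReal_nonneg
    refine ⟨K + 1, by linarith, fun Q hQ => ?_⟩
    obtain ⟨hmeas, hcomp, hVpos, hVfin⟩ := cube_facts hQ
    have hvint : IntegrableOn v Q volume := weight_integrableOn hv hQ
    obtain ⟨hweq, hIpos⟩ := wSet_eq hpos hQ hvint
    set Vr : ℝ := (volume Q).toReal with hVr
    have hVrpos : 0 < Vr := ENNReal.toReal_pos hVpos.ne' hVfin
    set I : ℝ := ∫ x in Q, v x with hIdef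
    set δ : ℝ := 1/(p₀ - 1) with hδ
    have hδpos : 0 < δ := by positivity
    have hδ1 : δ * (p₀ - 1) = 1 := by rw [hδ]; exact one_div_mul_cancel hp1'.ne'
    have hexp_eq : 1 - p₀/(p₀-1) = -δ := by
      rw [hδ]; field_simp; ring
    set σ : Rn n → ℝ := fun x => v x ^ (-δ) with hσdef
    have hσpos : ∀ x, 0 < σ x := fun x => Real.rpow_pos_of_pos (hpos x) _
    have hσexp : ∀ x, σ x = Real.exp (Real.log (v x) * (-δ)) := fun x =>
      Real.rpow_def_of_pos (hpos x) _
    have hσm : AEMeasurable σ (volume : Measure (Rn n)) := by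
      have h1 : AEMeasurable (fun x => Real.exp (Real.log (v x) * (-δ)))
          (volume : Measure (Rn n)) :=
        Real.measurable_exp.comp_aemeasurable
          ((Real.measurable_log.comp_aemeasurable hvm).mul_const _)
      exact h1.congr (Filter.Eventually.of_forall fun x => (hσexp x).symm)
    -- the A_p term for Q
    have hterm : ((volume Q)⁻¹ * ∫⁻ x in Q, ENNReal.ofReal (v x)) *
        ((volume Q)⁻¹ * ∫⁻ x in Q,
          ENNReal.ofReal (v x ^ (1 - p₀/(p₀-1)))) ^ (p₀-1) ≤ ApConst p₀ v :=
      le_iSup_of_le Q (le_iSup_of_le hQ le_rfl)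
    simp only [hexp_eq] at hterm
    set A : ℝ≥0∞ := (volume Q)⁻¹ * ∫⁻ x in Q, ENNReal.ofReal (v x) with hAdef
    set S : ℝ≥0∞ := ∫⁻ x in Q, ENNReal.ofReal (σ x) with hSdef
    have htermσ : A * ((volume Q)⁻¹ * S) ^ (p₀ - 1) ≤ ApConst p₀ v := hterm
    set B : ℝ≥0∞ := (volume Q)⁻¹ * S with hBdef
    have hVinv0 : (volume Q)⁻¹ ≠ 0 := ENNReal.inv_ne_zero.mpr hVfin
    have hVinvfin : (volume Q)⁻¹ ≠ ⊤ := ENNReal.inv_ne_top.mpr hVpos.ne'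
    have hwfin : (∫⁻ x in Q, ENNReal.ofReal (v x)) ≠ ⊤ := by
      show wSet v Q ≠ ⊤
      rw [hweq]; exact ENNReal.ofReal_ne_top
    have hwpos' : (∫⁻ x in Q, ENNReal.ofReal (v x)) ≠ 0 := by
      show wSet v Q ≠ 0
      rw [hweq]; exact (ENNReal.ofReal_pos.mpr hIpos).ne'
    have hA0 : A ≠ 0 := by
      rw [hAdef]; exact mul_ne_zero hVinv0 hwpos'
    have hAfin : A ≠ ⊤ := ENNReal.mul_ne_top hVinvfin hwfin
    have htop : A * B ^ (p₀ - 1) ≠ ⊤ := (lt_of_le_of_lt htermσ hApc.lt_top).ne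
    have hBfin : B ≠ ⊤ := by
      by_contra hB
      rw [hB, ENNReal.top_rpow_of_pos hp1', ENNReal.mul_top hA0] at htop
      exact htop rfl
    have hSfin : S ≠ ⊤ := by
      by_contra hS
      rw [hBdef, hS, ENNReal.mul_top hVinv0] at hBfin
      exact hBfin rfl
    -- σ integrable on Q
    have hσint : IntegrableOn σ Q volume := by
      refine ⟨hσm.restrict.aestronglyMeasurable, ?_⟩
      rw [hasFiniteIntegral_iff_ofReal (Filter.Eventually.of_forall fun x => (hσpos x).le)]
      exact hSfin.lt_top
    obtain ⟨hσeq, hSrpos⟩ := wSet_eq hσpos hQ hσint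
    set Sr : ℝ := ∫ x in Q, σ x with hSr
    -- log v integrable on Q
    have hlogm : AEStronglyMeasurable (fun x => Real.log (v x)) (volume.restrict Q) :=
      (Real.measurable_log.comp_aemeasurable hvm.restrict).aestronglyMeasurable
    have hlogint : IntegrableOn (fun x => Real.log (v x)) Q volume := by
      apply Integrable.mono' (g := fun x => v x + δ⁻¹ * σ x)
        (hvint.add (hσint.const_mul _)) hlogm
      apply Filter.Eventually.of_forall
      intro x
      rw [Real.norm_eq_abs, abs_le]
      have h1 : Real.log (v x) ≤ v x :=
        (Real.log_le_sub_one_of_pos (hpos x)).trans (by linarith)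
      have h2 : Real.log (σ x) ≤ σ x :=
        (Real.log_le_sub_one_of_pos (hσpos x)).trans (by linarith [hσpos x])
      have h3 : Real.log (σ x) = -δ * Real.log (v x) := Real.log_rpow (hpos x) _
      have h4 : -Real.log (v x) ≤ δ⁻¹ * σ x := by
        rw [h3] at h2
        calc -Real.log (v x) = δ⁻¹ * (-δ * Real.log (v x)) := by field_simp
          _ ≤ δ⁻¹ * σ x := by
              apply mul_le_mul_of_nonneg_left h2 (by positivity)
      constructor
      · have := mul_pos (inv_pos.mpr hδpos) (hσpos x)
        nlinarith [hpos x]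
      · nlinarith [mul_pos (inv_pos.mpr hδpos) (hσpos x)]
    refine ⟨hlogint, ?_⟩
    set L : ℝ := ∫ x in Q, Real.log (v x) with hL
    set M : ℝ := Vr⁻¹ * L with hM
    -- Jensen
    have hgi : IntegrableOn (fun x => Real.exp (Real.log (v x) * (-δ))) Q volume := by
      have : (fun x => Real.exp (Real.log (v x) * (-δ))) = σ := funext fun x => (hσexp x).symm
      rw [this]; exact hσint
    have hJ := exp_cube_avg_le hQ (hlogint.mul_const (-δ)) hgi
    have hintf : ∫ x in Q, Real.log (v x) * (-δ) = L * (-δ) := by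
      rw [hL]; exact integral_mul_const _ _
    have hintexp : ∫ x in Q, Real.exp (Real.log (v x) * (-δ)) = Sr := by
      rw [hSr]
      apply integral_congr_ae (Filter.Eventually.of_forall fun x => (hσexp x).symm)
    rw [hintf, hintexp] at hJ
    have hBr : Real.exp (-(δ * M)) ≤ Vr⁻¹ * Sr := by
      have : Vr⁻¹ * (L * (-δ)) = -(δ * M) := by rw [hM]; ring
      rwa [this] at hJ
    -- convert hterm to reals
    have hreal : (Vr⁻¹ * I) * (Vr⁻¹ * Sr) ^ (p₀ - 1) ≤ K := by
      have h1 := ENNReal.toReal_mono hApc htermσ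
      have hAr : A.toReal = Vr⁻¹ * I := by
        rw [hAdef, ENNReal.toReal_mul, ENNReal.toReal_inv]
        congr 1
        show (wSet v Q).toReal = I
        rw [hweq, ENNReal.toReal_ofReal hIpos.le]
      have hBr' : B.toReal = Vr⁻¹ * Sr := by
        rw [hBdef, ENNReal.toReal_mul, ENNReal.toReal_inv]
        congr 1
        show (wSet σ Q).toReal = Sr
        rw [hσeq, ENNReal.toReal_ofReal hSrpos.le]
      rwa [ENNReal.toReal_mul, ← ENNReal.toReal_rpow, hAr, hBr'] at h1
    have hJr : (Vr⁻¹ * I) * Real.exp (-M) ≤ K := by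
      refine le_trans ?_ hreal
      apply mul_le_mul_of_nonneg_left _ (by positivity)
      calc Real.exp (-M) = Real.exp (-(δ * M)) ^ (p₀ - 1) := by
            rw [← Real.exp_mul]
            congr 1
            linear_combination M * hδ1
        _ ≤ (Vr⁻¹ * Sr) ^ (p₀ - 1) :=
            Real.rpow_le_rpow (Real.exp_pos _).le hBr hp1'.le
    have hfinal : Vr⁻¹ * I ≤ K * Real.exp M := by
      have h2 : (Vr⁻¹ * I) * Real.exp (-M) * Real.exp M ≤ K * Real.exp M :=
        mul_le_mul_of_nonneg_right hJr (Real.exp_pos _).le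
      rwa [mul_assoc, ← Real.exp_add, neg_add_cancel, Real.exp_zero, mul_one] at h2
    calc I = Vr * (Vr⁻¹ * I) := by field_simp
      _ ≤ Vr * (K * Real.exp M) := mul_le_mul_of_nonneg_left hfinal hVrpos.le
      _ ≤ (K + 1) * Vr * Real.exp M := by nlinarith [Real.exp_pos M, hVrpos]

end S6

/-- for A_∞ weights, w₁(Q)^{1/p₁} w₂(Q)^{1/p₂} ≈ w(Q)^{1/p} over cubes. -/
theorem stmt_6 {n : ℕ} (p p₁ p₂ : ℝ) (hp₁ : 0 < p₁) (hp₂ : 0 < p₂)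
    (hp : 1 / p = 1 / p₁ + 1 / p₂)
    (w₁ w₂ : Rn n → ℝ) (hw₁ : IsWeight w₁) (hw₂ : IsWeight w₂)
    (hA₁ : MemAinfty w₁) (hA₂ : MemAinfty w₂)
    (w : Rn n → ℝ) (hw : ∀ x, w x = w₁ x ^ (p / p₁) * w₂ x ^ (p / p₂)) :
    ∃ c C : ℝ, 0 < c ∧ 0 < C ∧ ∀ Q : Set (Rn n), IsCube Q →
      ENNReal.ofReal c * (wSet w Q) ^ (1 / p) ≤
          (wSet w₁ Q) ^ (1 / p₁) * (wSet w₂ Q) ^ (1 / p₂) ∧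
        (wSet w₁ Q) ^ (1 / p₁) * (wSet w₂ Q) ^ (1 / p₂) ≤
          ENNReal.ofReal C * (wSet w Q) ^ (1 / p) := by
  have hp1pos := hw₁.1
  have hp2pos := hw₂.1
  have hwpos : ∀ x, 0 < w x := fun x => by
    rw [hw x]
    exact mul_pos (Real.rpow_pos_of_pos (hp1pos x) _) (Real.rpow_pos_of_pos (hp2pos x) _)
  -- basic exponent facts
  have hppos : 0 < p := by
    rcases lt_trichotomy p 0 with h | h | h
    · have : 1 / p < 0 := div_neg_of_pos_of_neg one_pos h
      have : (0:ℝ) < 1 / p₁ + 1 / p₂ := by positivity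
      linarith
    · rw [h] at hp; simp at hp
      have : (0:ℝ) < p₁⁻¹ + p₂⁻¹ := by positivity
      linarith
    · exact h
  have hsum : p / p₁ + p / p₂ = 1 := by
    have := hp
    field_simp at this ⊢
    linarith [this]
  have h1div : 1 / p₁ + 1 / p₂ = 1 / p := hp.symm
  have hpp1 : 0 < p / p₁ := by positivity
  have hpp2 : 0 < p / p₂ := by positivity
  have hpp1lt : p / p₁ < 1 := by linarith
  have hpp2lt : p / p₂ < 1 := by linarith
  -- measurability
  have hw1m : AEMeasurable w₁ (volume : Measure (Rn n)) := hw₁.2.aestronglyMeasurable.aemeasurable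
  have hw2m : AEMeasurable w₂ (volume : Measure (Rn n)) := hw₂.2.aestronglyMeasurable.aemeasurable
  have hrpm : ∀ (v : Rn n → ℝ), (∀ x, 0 < v x) → AEMeasurable v (volume : Measure (Rn n)) →
      ∀ c : ℝ, AEMeasurable (fun x => v x ^ c) (volume : Measure (Rn n)) := by
    intro v hvpos hvm c
    have h1 : AEMeasurable (fun x => Real.exp (Real.log (v x) * c))
        (volume : Measure (Rn n)) :=
      Real.measurable_exp.comp_aemeasurable
        ((Real.measurable_log.comp_aemeasurable hvm).mul_const _)
    exact h1.congr (Filter.Eventually.of_forall fun x =>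
      (Real.rpow_def_of_pos (hvpos x) c).symm)
  have hwm : AEMeasurable w (volume : Measure (Rn n)) := by
    have := ((hrpm w₁ hp1pos hw1m (p/p₁)).mul (hrpm w₂ hp2pos hw2m (p/p₂)))
    exact this.congr (Filter.Eventually.of_forall fun x => (hw x).symm)
  -- a priori bounds
  obtain ⟨C₁, hC₁pos, hB₁⟩ := S6.ainfty_bound hw₁ hA₁
  obtain ⟨C₂, hC₂pos, hB₂⟩ := S6.ainfty_bound hw₂ hA₂
  refine ⟨1, C₁ ^ (1/p₁) * C₂ ^ (1/p₂), one_pos, by positivity, fun Q hQ => ?_⟩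
  obtain ⟨hmeas, hcomp, hVpos, hVfin⟩ := S6.cube_facts hQ
  have hv1int : IntegrableOn w₁ Q volume := S6.weight_integrableOn hw₁ hQ
  have hv2int : IntegrableOn w₂ Q volume := S6.weight_integrableOn hw₂ hQ
  obtain ⟨hweq₁, hI₁pos⟩ := S6.wSet_eq hp1pos hQ hv1int
  obtain ⟨hweq₂, hI₂pos⟩ := S6.wSet_eq hp2pos hQ hv2int
  -- Hölder inequality for the lintegrals
  have hconj : Real.HolderConjugate (p₁/p) (p₂/p) := by
    rw [Real.holderConjugate_iff]; constructor
    · rw [lt_div_iff₀ hppos, one_mul]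
      exact (div_lt_one hp₁).mp hpp1lt
    · rw [inv_div, inv_div, hsum]
  have hHolder : wSet w Q ≤ (wSet w₁ Q) ^ (p/p₁) * (wSet w₂ Q) ^ (p/p₂) := by
    have hfm : AEMeasurable (fun x => ENNReal.ofReal (w₁ x ^ (p/p₁)))
        (volume.restrict Q) :=
      (ENNReal.measurable_ofReal.comp_aemeasurable (hrpm w₁ hp1pos hw1m (p/p₁))).restrict
    have hgm : AEMeasurable (fun x => ENNReal.ofReal (w₂ x ^ (p/p₂)))
        (volume.restrict Q) :=
      (ENNReal.measurable_ofReal.comp_aemeasurable (hrpm w₂ hp2pos hw2m (p/p₂))).restrict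
    have h := ENNReal.lintegral_mul_le_Lp_mul_Lq (volume.restrict Q) hconj hfm hgm
    have he1 : ∫⁻ x in Q, ENNReal.ofReal (w x) =
        ∫⁻ x in Q, (fun x => ENNReal.ofReal (w₁ x ^ (p/p₁))) x *
          (fun x => ENNReal.ofReal (w₂ x ^ (p/p₂))) x := by
      apply lintegral_congr
      intro x
      rw [hw x, ENNReal.ofReal_mul (Real.rpow_nonneg (hp1pos x).le _)]
    have he2 : ∫⁻ x in Q, (fun x => ENNReal.ofReal (w₁ x ^ (p/p₁))) x ^ (p₁/p) =
        ∫⁻ x in Q, ENNReal.ofReal (w₁ x) := by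
      apply lintegral_congr
      intro x
      rw [ENNReal.ofReal_rpow_of_pos (Real.rpow_pos_of_pos (hp1pos x) _),
        ← Real.rpow_mul (hp1pos x).le]
      congr 1
      field_simp; exact Real.rpow_one _
    have he3 : ∫⁻ x in Q, (fun x => ENNReal.ofReal (w₂ x ^ (p/p₂))) x ^ (p₂/p) =
        ∫⁻ x in Q, ENNReal.ofReal (w₂ x) := by
      apply lintegral_congr
      intro x
      rw [ENNReal.ofReal_rpow_of_pos (Real.rpow_pos_of_pos (hp2pos x) _),
        ← Real.rpow_mul (hp2pos x).le]
      congr 1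
      field_simp; exact Real.rpow_one _
    rw [he2, he3, one_div_div, one_div_div] at h
    calc wSet w Q = ∫⁻ x in Q, (fun x => ENNReal.ofReal (w₁ x ^ (p/p₁))) x *
          (fun x => ENNReal.ofReal (w₂ x ^ (p/p₂))) x := he1
      _ ≤ _ := h
  -- integrability of w on Q
  have hwSfin : wSet w Q ≠ ⊤ := by
    apply ne_top_of_le_ne_top _ hHolder
    exact ENNReal.mul_ne_top
      (ENNReal.rpow_ne_top_of_nonneg hpp1.le (by rw [hweq₁]; exact ENNReal.ofReal_ne_top))
      (ENNReal.rpow_ne_top_of_nonneg hpp2.le (by rw [hweq₂]; exact ENNReal.ofReal_ne_top))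
  have hwint : IntegrableOn w Q volume := by
    refine ⟨hwm.restrict.aestronglyMeasurable, ?_⟩
    rw [hasFiniteIntegral_iff_ofReal (Filter.Eventually.of_forall fun x => (hwpos x).le)]
    exact hwSfin.lt_top
  obtain ⟨hweqw, hIwpos⟩ := S6.wSet_eq hwpos hQ hwint
  constructor
  · -- lower bound via Hölder
    rw [ENNReal.ofReal_one, one_mul]
    calc (wSet w Q) ^ (1/p) ≤ ((wSet w₁ Q) ^ (p/p₁) * (wSet w₂ Q) ^ (p/p₂)) ^ (1/p) :=
        ENNReal.rpow_le_rpow hHolder (by positivity)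
      _ = (wSet w₁ Q) ^ (1/p₁) * (wSet w₂ Q) ^ (1/p₂) := by
        rw [ENNReal.mul_rpow_of_nonneg _ _ (by positivity : (0:ℝ) ≤ 1/p),
          ← ENNReal.rpow_mul, ← ENNReal.rpow_mul]
        congr 2 <;> field_simp
  · -- upper bound
    obtain ⟨hlog1, hBQ₁⟩ := hB₁ Q hQ
    obtain ⟨hlog2, hBQ₂⟩ := hB₂ Q hQ
    set Vr : ℝ := (volume Q).toReal with hVr
    have hVrpos : 0 < Vr := ENNReal.toReal_pos hVpos.ne' hVfin
    set I₁ : ℝ := ∫ x in Q, w₁ x with hI₁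
    set I₂ : ℝ := ∫ x in Q, w₂ x with hI₂
    set Iw : ℝ := ∫ x in Q, w x with hIw
    set L₁ : ℝ := ∫ x in Q, Real.log (w₁ x) with hL₁
    set L₂ : ℝ := ∫ x in Q, Real.log (w₂ x) with hL₂
    -- log w decomposition
    have hlogw : ∀ x, Real.log (w x) = (p/p₁) * Real.log (w₁ x) + (p/p₂) * Real.log (w₂ x) := by
      intro x
      rw [hw x, Real.log_mul (Real.rpow_pos_of_pos (hp1pos x) _).ne'
        (Real.rpow_pos_of_pos (hp2pos x) _).ne',
        Real.log_rpow (hp1pos x), Real.log_rpow (hp2pos x)]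
    have hlogwint : IntegrableOn (fun x => Real.log (w x)) Q volume := by
      apply Integrable.congr ((hlog1.const_mul (p/p₁)).add (hlog2.const_mul (p/p₂)))
      exact Filter.Eventually.of_forall fun x => (hlogw x).symm
    have hLw : ∫ x in Q, Real.log (w x) = (p/p₁) * L₁ + (p/p₂) * L₂ := by
      rw [integral_congr_ae (Filter.Eventually.of_forall hlogw),
        integral_add (hlog1.const_mul (p/p₁)) (hlog2.const_mul (p/p₂)),
        integral_const_mul, integral_const_mul]
    -- Jensen for w
    have hgi : IntegrableOn (fun x => Real.exp (Real.log (w x))) Q volume := by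
      apply Integrable.congr hwint
      exact Filter.Eventually.of_forall fun x => (Real.exp_log (hwpos x)).symm
    have hJ := S6.exp_cube_avg_le hQ hlogwint hgi
    have hJw : Real.exp (Vr⁻¹ * ((p/p₁) * L₁ + (p/p₂) * L₂)) ≤ Vr⁻¹ * Iw := by
      rw [← hLw]
      refine le_trans hJ ?_
      rw [← hVr]
      apply mul_le_mul_of_nonneg_left _ (by positivity)
      apply le_of_eq
      apply integral_congr_ae
      exact Filter.Eventually.of_forall fun x => Real.exp_log (hwpos x)
    -- now real arithmetic
    set M₁ : ℝ := Vr⁻¹ * L₁ with hM₁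
    set M₂ : ℝ := Vr⁻¹ * L₂ with hM₂
    have key : I₁ ^ (1/p₁) * I₂ ^ (1/p₂) ≤
        (C₁ ^ (1/p₁) * C₂ ^ (1/p₂)) * Iw ^ (1/p) := by
      have h1 : I₁ ^ (1/p₁) ≤ (C₁ * Vr * Real.exp M₁) ^ (1/p₁) :=
        Real.rpow_le_rpow hI₁pos.le hBQ₁ (by positivity)
      have h2 : I₂ ^ (1/p₂) ≤ (C₂ * Vr * Real.exp M₂) ^ (1/p₂) :=
        Real.rpow_le_rpow hI₂pos.le hBQ₂ (by positivity)
      calc I₁ ^ (1/p₁) * I₂ ^ (1/p₂)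
          ≤ (C₁ * Vr * Real.exp M₁) ^ (1/p₁) * (C₂ * Vr * Real.exp M₂) ^ (1/p₂) := by
            apply mul_le_mul h1 h2 (Real.rpow_nonneg hI₂pos.le _) (by positivity)
        _ = (C₁ ^ (1/p₁) * C₂ ^ (1/p₂)) *
            ((Vr ^ (1/p₁) * Vr ^ (1/p₂)) * (Real.exp M₁ ^ (1/p₁) * Real.exp M₂ ^ (1/p₂))) := by
            rw [Real.mul_rpow (by positivity) (by positivity),
              Real.mul_rpow (by positivity) (by positivity),
              Real.mul_rpow (by positivity) (by positivity),
              Real.mul_rpow (by positivity) (by positivity)]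
            ring
        _ = (C₁ ^ (1/p₁) * C₂ ^ (1/p₂)) *
            (Vr * Real.exp (Vr⁻¹ * ((p/p₁) * L₁ + (p/p₂) * L₂))) ^ (1/p) := by
            congr 1
            have e1 : Vr ^ (1/p₁) * Vr ^ (1/p₂) = Vr ^ (1/p) := by
              rw [← Real.rpow_add hVrpos, h1div]
            have e2 : Real.exp M₁ ^ (1/p₁) * Real.exp M₂ ^ (1/p₂) =
                Real.exp (M₁ * (1/p₁) + M₂ * (1/p₂)) := by
              rw [← Real.exp_mul, ← Real.exp_mul, ← Real.exp_add]
            have e3 : M₁ * (1/p₁) + M₂ * (1/p₂) =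
                (Vr⁻¹ * ((p/p₁) * L₁ + (p/p₂) * L₂)) * (1/p) := by
              rw [hM₁, hM₂]
              field_simp
            rw [e1, e2, e3, Real.mul_rpow hVrpos.le (Real.exp_pos _).le, ← Real.exp_mul]
        _ ≤ (C₁ ^ (1/p₁) * C₂ ^ (1/p₂)) * Iw ^ (1/p) := by
            apply mul_le_mul_of_nonneg_left _ (by positivity)
            apply Real.rpow_le_rpow (by positivity) _ (by positivity)
            calc Vr * Real.exp (Vr⁻¹ * ((p/p₁) * L₁ + (p/p₂) * L₂)) ≤ Vr * (Vr⁻¹ * Iw) :=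
                mul_le_mul_of_nonneg_left hJw hVrpos.le
              _ = Iw := by field_simp
    -- convert back to ENNReal
    rw [hweq₁, hweq₂, hweqw,
      ENNReal.ofReal_rpow_of_pos hI₁pos, ENNReal.ofReal_rpow_of_pos hI₂pos,
      ENNReal.ofReal_rpow_of_pos hIwpos,
      ← ENNReal.ofReal_mul (Real.rpow_nonneg hI₁pos.le _),
      ← ENNReal.ofReal_mul (by positivity)]
    exact ENNReal.ofReal_le_ofReal key
end
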